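/- arXiv:2501.18553 — 8 statements merged into one kernel-verified Lean document; each statement's English description precedes it below -/
import Mathlib

section
/- Let k be a field with char(k) = 2, let V be a finite-dimensional k-vector space, and let B, B' : V × V → k be bilinear forms whose associated alternating forms ω_B and ω_{B'} are nondegenerate. If there exists σ ∈ GL(V) with B'(σv, σv) = B(v,v) for all v ∈ V, then V♯_B is isomorphic as a group to V♯_{B'}. Conversely, if k = 𝔽_2 and V♯_B is isomorphic as a group to V♯_{B'}, then there exists σ ∈ GL(V) with B'(σv, σv) = B(v,v) for all v ∈ V. -/
/-- Let `k` be a field of characteristic `2`, `V` a finite-dimensional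
`k`-vector space, and `B, B'` bilinear forms on `V` whose associated
alternating forms `ω_B(v,w) = B(v,w) - B(w,v)` and `ω_{B'}` are nondegenerate.
If there is `σ ∈ GL(V)` with `B'(σv,σv) = B(v,v)` for all `v`, then `V♯_B` is
isomorphic as a group to `V♯_{B'}` (where `V♯_B` is `k × V` with multiplication
`(a,v)·(b,w) = (a + b + B(v,w), v + w)`).  Conversely, if `k = 𝔽_2` (i.e. `k`
has exactly two elements) and `V♯_B ≅ V♯_{B'}`, then such a `σ` exists. -/
theorem stmt_2 (k : Type*) [Field k] (hk : ringChar k = 2)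
    (V : Type*) [AddCommGroup V] [Module k V] [FiniteDimensional k V]
    (B B' : V →ₗ[k] V →ₗ[k] k)
    (hB : ∀ v : V, (∀ w : V, B v w - B w v = 0) → v = 0)
    (hB' : ∀ v : V, (∀ w : V, B' v w - B' w v = 0) → v = 0) :
    ((∃ σ : V ≃ₗ[k] V, ∀ v : V, B' (σ v) (σ v) = B v v) →
      ∃ e : (k × V) ≃ (k × V), ∀ x y : k × V,
        e (x.1 + y.1 + B x.2 y.2, x.2 + y.2) =
          ((e x).1 + (e y).1 + B' (e x).2 (e y).2, (e x).2 + (e y).2)) ∧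
    (Nat.card k = 2 →
      (∃ e : (k × V) ≃ (k × V), ∀ x y : k × V,
        e (x.1 + y.1 + B x.2 y.2, x.2 + y.2) =
          ((e x).1 + (e y).1 + B' (e x).2 (e y).2, (e x).2 + (e y).2)) →
      ∃ σ : V ≃ₗ[k] V, ∀ v : V, B' (σ v) (σ v) = B v v) := by
  haveI : CharP k 2 := hk ▸ ringChar.charP k
  have hkk : ∀ a : k, a + a = 0 := fun a => CharTwo.add_self_eq_zero a
  have hneg : ∀ a : k, -a = a := fun a => CharTwo.neg_eq a
  have hV2 : ∀ v : V, v + v = 0 := by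
    intro v
    have : v + v = ((1 : k) + 1) • v := by rw [add_smul, one_smul]
    rw [this, CharTwo.add_self_eq_zero (1 : k), zero_smul]
  constructor
  · rintro ⟨σ, hσ⟩
    -- C = bilinear form B'(σ·,σ·) - B
    set C : V →ₗ[k] V →ₗ[k] k :=
      (B'.compl₁₂ σ.toLinearMap σ.toLinearMap) - B with hC
    have hCapp : ∀ v w, C v w = B' (σ v) (σ w) - B v w := by
      intro v w; simp [hC]
    have hCdiag : ∀ v, C v v = 0 := by
      intro v; rw [hCapp, hσ, sub_self]
    have hCsymm : ∀ v w, C w v = C v w := by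
      intro v w
      have h := hCdiag (v + w)
      have : C v w + C w v = 0 := by
        have hexp : C (v + w) (v + w) = C v v + C v w + (C w v + C w w) := by
          simp [map_add, LinearMap.add_apply]; ring
        rw [hexp, hCdiag, hCdiag] at h
        linear_combination h
      linear_combination this - hkk (C v w)
    -- basis
    set n := Module.finrank k V
    set b : Module.Basis (Fin n) k V := Module.finBasis k V
    set M : Matrix (Fin n) (Fin n) k :=
      Matrix.of fun i j => if i < j then C (b i) (b j) else 0 with hM
    set D : V →ₗ[k] V →ₗ[k] k := Matrix.toLinearMap₂ b b M with hD
    have hDsum : ∀ v w, D v w + D w v = C v w := by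
      have : D + D.flip = C := by
        apply LinearMap.ext_basis b b
        intro i j
        have h1 : D (b i) (b j) = M i j := by
          simp [hD, Matrix.toLinearMap₂_apply, Finsupp.single_apply]
        have h2 : D (b j) (b i) = M j i := by
          simp [hD, Matrix.toLinearMap₂_apply, Finsupp.single_apply]
        simp only [LinearMap.add_apply, LinearMap.flip_apply, h1, h2, hM, Matrix.of_apply]
        rcases lt_trichotomy i j with h | h | h
        · rw [if_pos h, if_neg (not_lt.mpr h.le), add_zero]
        · subst h; rw [if_neg (lt_irrefl i), add_zero, hCdiag]
        · rw [if_neg (not_lt.mpr h.le), if_pos h, zero_add, hCsymm]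
      intro v w
      calc D v w + D w v = (D + D.flip) v w := by
            simp [LinearMap.add_apply, LinearMap.flip_apply]
        _ = C v w := by rw [this]
    refine ⟨{
      toFun := fun x => (x.1 + D x.2 x.2, σ x.2)
      invFun := fun x => (x.1 - D (σ.symm x.2) (σ.symm x.2), σ.symm x.2)
      left_inv := ?_
      right_inv := ?_ }, ?_⟩
    · rintro ⟨a, v⟩; simp
    · rintro ⟨a, v⟩; simp
    · rintro ⟨a, v⟩ ⟨c, w⟩
      simp only [Equiv.coe_fn_mk, map_add]
      refine Prod.ext ?_ (by simp [map_add])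
      simp only [map_add, LinearMap.add_apply]
      have hd := hDsum v w
      have hC' := hCapp v w
      linear_combination hd + hC'
  · rintro hcard ⟨e, he⟩
    haveI : Finite k := (Nat.card_ne_zero.mp (by omega)).2
    haveI : Finite V := Module.finite_of_finite k  -- maybe wrong name
    haveI : DecidableEq k := Classical.decEq k
    have hk01 : ∀ c : k, c = 0 ∨ c = 1 := by
      intro c
      by_contra h
      push_neg at h
      haveI : Fintype k := Fintype.ofFinite k
      have h3 : ({0, 1, c} : Finset k).card = 3 := by
        have hm1 : (0:k) ∉ ({1, c} : Finset k) := by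
          simp only [Finset.mem_insert, Finset.mem_singleton]
          push_neg
          exact ⟨fun hh => one_ne_zero hh.symm, fun hh => h.1 hh.symm⟩
        have hm2 : (1:k) ∉ ({c} : Finset k) := by
          simp only [Finset.mem_singleton]
          exact fun hh => h.2 hh.symm
        rw [Finset.card_insert_of_notMem hm1, Finset.card_insert_of_notMem hm2,
          Finset.card_singleton]
      have hle : ({0, 1, c} : Finset k).card ≤ Fintype.card k :=
        Finset.card_le_card (Finset.subset_univ _)
      rw [h3] at hle
      rw [Nat.card_eq_fintype_card] at hcard
      omega
    -- second component of e (a,0) is 0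
    have hz : ∀ a : k, (e (a, 0)).2 = 0 := by
      intro a
      apply hB'
      intro w
      set y := e.symm (0, w) with hy
      have hey : e y = (0, w) := e.apply_symm_apply _
      have h1 := he (a, 0) y
      have h2 := he y (a, 0)
      simp only [map_zero, LinearMap.zero_apply, add_zero, zero_add] at h1 h2
      rw [hey] at h1 h2
      have harg : ((a : k) + y.1, y.2) = (y.1 + a, y.2) := by rw [add_comm]
      rw [harg] at h1
      rw [h1] at h2
      have := congrArg Prod.fst h2
      simp only at this
      linear_combination this
    have h2nd : ∀ (a : k) (u : V), (e (a, u)).2 = (e (0, u)).2 := by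
      intro a u
      have h1 := he (a, 0) (0, u)
      simp only [map_zero, LinearMap.zero_apply, add_zero, zero_add] at h1
      rw [congrArg Prod.snd h1]
      simp [hz a]
    set σ₀ : V → V := fun v => (e (0, v)).2 with hσ₀
    have hadd : ∀ v w, σ₀ (v + w) = σ₀ v + σ₀ w := by
      intro v w
      have h1 := he (0, v) (0, w)
      simp only [zero_add] at h1
      have := congrArg Prod.snd h1
      simp only at this
      rw [← this, hσ₀]
      simp [h2nd]
    have hzero : σ₀ 0 = 0 := by
      have := hadd 0 0
      simp only [add_zero] at this
      exact left_eq_add.mp this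
    have hsurj : Function.Surjective σ₀ := by
      intro w
      refine ⟨(e.symm (0, w)).2, ?_⟩
      have : σ₀ (e.symm (0, w)).2 = (e ((e.symm (0,w)).1, (e.symm (0,w)).2)).2 := by
        rw [hσ₀]; exact (h2nd _ _).symm
      rw [this]
      simp
    set σl : V →ₗ[k] V := {
      toFun := σ₀
      map_add' := hadd
      map_smul' := by
        intro c v
        rcases hk01 c with h | h <;> subst h <;> simp [hzero]
    } with hσl
    have hinj : Function.Injective σl := by
      have : Function.Surjective σl := hsurj
      exact Finite.injective_iff_surjective.mpr this
    set σ : V ≃ₗ[k] V := LinearEquiv.ofBijective σl ⟨hinj, hsurj⟩ with hσdef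
    refine ⟨σ, ?_⟩
    -- φ = id on k
    have hφadd : ∀ a c : k, (e (a + c, 0)).1 = (e (a,0)).1 + (e (c,0)).1 := by
      intro a c
      have h1 := he (a, 0) (c, 0)
      simp only [map_zero, LinearMap.zero_apply, add_zero] at h1
      have := congrArg Prod.fst h1
      simp only at this
      rw [this, hz a, hz c]
      simp
    have hφ0 : (e (0, (0:V))).1 = 0 := by
      have := hφadd 0 0
      simp only [add_zero] at this
      linear_combination -this
    have hφ : ∀ a : k, (e (a, 0)).1 = a := by
      intro a
      rcases hk01 a with h | h
      · subst h; exact hφ0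
      · subst h
        rcases hk01 ((e (1, (0:V))).1) with h1 | h1
        · exfalso
          have : e (1, (0:V)) = e (0, 0) := by
            refine Prod.ext ?_ ?_
            · rw [h1, hφ0]
            · rw [hz 1, hz 0]
          exact one_ne_zero (congrArg Prod.fst (e.injective this))
        · exact h1
    intro v
    have h1 := he (0, v) (0, v)
    simp only [zero_add] at h1
    rw [hV2 v] at h1
    have hfst := congrArg Prod.fst h1
    simp only at hfst
    have hσv : σ v = σ₀ v := rfl
    rw [hφ (B v v)] at hfst
    rw [hσv]
    show B' ((e (0, v)).2) ((e (0, v)).2) = B v v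
    linear_combination -hfst - hkk ((e (0, v)).1)
end

section
/- Let p be an odd prime. Then any two Heisenberg 𝔽_p-groups of the same cardinality are isomorphic. -/
open scoped commutatorElement

/-! Model Heisenberg groups -/

@[ext] structure Heis (p n : ℕ) where
  a : Fin n → ZMod p
  b : Fin n → ZMod p
  c : ZMod p

namespace Heis

variable {p n : ℕ}

instance : Mul (Heis p n) :=
  ⟨fun u v => ⟨u.a + v.a, u.b + v.b, u.c + v.c - ∑ i, v.a i * u.b i⟩⟩
instance : One (Heis p n) := ⟨⟨0, 0, 0⟩⟩
instance : Inv (Heis p n) :=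
  ⟨fun u => ⟨-u.a, -u.b, -u.c - ∑ i, u.a i * u.b i⟩⟩

lemma mul_def (u v : Heis p n) :
    u * v = ⟨u.a + v.a, u.b + v.b, u.c + v.c - ∑ i, v.a i * u.b i⟩ := rfl
lemma one_def : (1 : Heis p n) = ⟨0, 0, 0⟩ := rfl
lemma inv_def (u : Heis p n) :
    u⁻¹ = ⟨-u.a, -u.b, -u.c - ∑ i, u.a i * u.b i⟩ := rfl

instance : Group (Heis p n) where
  mul_assoc u v w := by
    simp only [mul_def, mk.injEq, Pi.add_apply,
      add_mul, mul_add, Finset.sum_add_distrib]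
    refine ⟨by abel, by abel, by abel⟩
  one_mul u := by simp [mul_def, one_def]
  mul_one u := by simp [mul_def, one_def]
  inv_mul_cancel u := by
    simp only [inv_def, mul_def, one_def, mk.injEq, Pi.neg_apply, mul_neg, neg_mul,
      Finset.sum_neg_distrib]
    refine ⟨by abel, by abel, by abel⟩

def equivProd : Heis p n ≃ ((Fin n → ZMod p) × (Fin n → ZMod p) × ZMod p) where
  toFun u := (u.a, u.b, u.c)
  invFun x := ⟨x.1, x.2.1, x.2.2⟩
  left_inv u := rfl
  right_inv x := rfl

instance [NeZero p] : Finite (Heis p n) := Finite.of_equiv _ equivProd.symm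

lemma card (hp : 0 < p) : Nat.card (Heis p n) = p ^ (2 * n + 1) := by
  haveI : NeZero p := ⟨hp.ne'⟩
  rw [Nat.card_congr equivProd, Nat.card_prod, Nat.card_prod, Nat.card_fun,
    Nat.card_zmod]
  simp only [Nat.card_eq_fintype_card, Fintype.card_fin]
  ring

lemma c_mul (e : ZMod p) (u : Heis p n) :
    (⟨0, 0, e⟩ : Heis p n) * u = ⟨u.a, u.b, u.c + e⟩ := by
  simp only [mul_def, mk.injEq, Pi.zero_apply, mul_zero, Finset.sum_const_zero]
  refine ⟨by abel, by abel, by ring⟩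

lemma c_inv (e : ZMod p) : (⟨0, 0, e⟩ : Heis p n)⁻¹ = ⟨0, 0, -e⟩ := by
  simp only [inv_def, mk.injEq, Pi.zero_apply, mul_zero, zero_mul, Finset.sum_const_zero]
  refine ⟨by abel, by abel, by ring⟩

lemma c_pow (e : ZMod p) (j : ℕ) :
    (⟨0, 0, e⟩ : Heis p n) ^ j = ⟨0, 0, (j : ZMod p) * e⟩ := by
  induction j with
  | zero => simp [one_def]
  | succ j ih =>
      rw [pow_succ, ih, mul_def]
      simp only [mk.injEq, Pi.zero_apply, mul_zero, Finset.sum_const_zero, Nat.cast_add,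
        Nat.cast_one]
      refine ⟨by abel, by abel, by ring⟩

end Heis

/-! Commutator identities in class ≤ 2 groups -/

section Class2
variable {G : Type*} [Group G] (hc : ∀ g h : G, ⁅g, h⁆ ∈ Subgroup.center G)
include hc

lemma comm_swap (g h : G) : ∀ b : G, b * ⁅g, h⁆ = ⁅g, h⁆ * b :=
  Subgroup.mem_center_iff.mp (hc g h)

lemma mul_rot (g h : G) : g * h = h * g * ⁅g, h⁆ := by
  calc g * h = ⁅g, h⁆ * (h * g) := by group
  _ = h * g * ⁅g, h⁆ := (comm_swap hc g h (h * g)).symm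

lemma comm_mul_right (g h k : G) : ⁅g, h * k⁆ = ⁅g, h⁆ * ⁅g, k⁆ := by
  have h1 : ⁅g, h * k⁆ = ⁅g, h⁆ * (h * ⁅g, k⁆ * h⁻¹) := by group
  rw [h1, comm_swap hc g k h, mul_assoc ⁅g, k⁆, mul_inv_cancel, mul_one]

lemma comm_pow_right (g h : G) (m : ℕ) : ⁅g, h ^ m⁆ = ⁅g, h⁆ ^ m := by
  induction m with
  | zero => simp
  | succ m ih => rw [pow_succ, comm_mul_right hc, ih, pow_succ]

lemma comm_inv_right (g h : G) : ⁅g, h⁻¹⁆ = ⁅g, h⁆⁻¹ := by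
  have : (1 : G) = ⁅g, h⁆ * ⁅g, h⁻¹⁆ := by
    rw [← comm_mul_right hc, mul_inv_cancel]; simp
  rw [eq_comm, inv_eq_iff_mul_eq_one, ← this]

lemma comm_pow_left (g h : G) (m : ℕ) : ⁅g ^ m, h⁆ = ⁅g, h⁆ ^ m := by
  have : ⁅g ^ m, h⁆ = ⁅h, g ^ m⁆⁻¹ := by rw [commutatorElement_inv]
  rw [this, comm_pow_right hc, ← commutatorElement_inv, inv_pow, inv_inv]

/-- The master rearrangement identity. -/
lemma master (x y k k' : G) (A B A' B' : ℕ)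
    (h1 : k * x = x * k) (h2 : k * y = y * k) :
    (x ^ A * y ^ B * k) * (x ^ A' * y ^ B' * k') =
      x ^ (A + A') * (y ^ (B + B') * (⁅y, x⁆ ^ (A' * B) * (k * k'))) := by
  have c1 : k * x ^ A' = x ^ A' * k := (Commute.pow_right (h1 : Commute k x) A')
  have c2 : k * y ^ B' = y ^ B' * k := (Commute.pow_right (h2 : Commute k y) B')
  have w_def : y ^ B * x ^ A' = x ^ A' * y ^ B * ⁅y, x⁆ ^ (A' * B) := by
    rw [mul_rot hc (y ^ B) (x ^ A'), comm_pow_left hc, comm_pow_right hc, ← pow_mul]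
  have cw : ∀ b : G, b * ⁅y, x⁆ ^ (A' * B) = ⁅y, x⁆ ^ (A' * B) * b := by
    intro b
    exact (Subgroup.mem_center_iff.mp (Subgroup.pow_mem _ (hc y x) _) b)
  have e1 : ∀ t : G, k * (x ^ A' * t) = x ^ A' * (k * t) := by
    intro t; rw [← mul_assoc, c1, mul_assoc]
  have e2 : ∀ t : G, k * (y ^ B' * t) = y ^ B' * (k * t) := by
    intro t; rw [← mul_assoc, c2, mul_assoc]
  have e3 : ∀ t : G, y ^ B * (x ^ A' * t) = x ^ A' * (y ^ B * (⁅y, x⁆ ^ (A' * B) * t)) := by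
    intro t
    rw [← mul_assoc, w_def]
    simp only [mul_assoc]
  have e4 : ∀ t : G, ⁅y, x⁆ ^ (A' * B) * (y ^ B' * t) = y ^ B' * (⁅y, x⁆ ^ (A' * B) * t) := by
    intro t; rw [← mul_assoc, ← cw, mul_assoc]
  calc (x ^ A * y ^ B * k) * (x ^ A' * y ^ B' * k')
      = x ^ A * (y ^ B * (k * (x ^ A' * (y ^ B' * k')))) := by simp only [mul_assoc]
    _ = x ^ A * (y ^ B * (x ^ A' * (y ^ B' * (k * k')))) := by rw [e1, e2]
    _ = x ^ A * (x ^ A' * (y ^ B * (⁅y, x⁆ ^ (A' * B) * (y ^ B' * (k * k'))))) := by rw [e3]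
    _ = x ^ A * (x ^ A' * (y ^ B * (y ^ B' * (⁅y, x⁆ ^ (A' * B) * (k * k'))))) := by rw [e4]
    _ = x ^ (A + A') * (y ^ (B + B') * (⁅y, x⁆ ^ (A' * B) * (k * k'))) := by
        rw [pow_add, pow_add]; simp only [mul_assoc]

end Class2

/-! The key classification lemma -/

/-- A *Heisenberg `𝔽_p`-group*: a finite group `P` whose center has order `p`,
such that `P/Z(P)` is abelian of exponent dividing `p`, and such that,
if `p ≠ 2`, `P` itself has exponent dividing `p`. -/
structure IsHeisenberg (p : ℕ) (P : Type*) [Group P] : Prop where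
  card_center : Nat.card (Subgroup.center P) = p
  commutator_mem : ∀ x y : P, ⁅x, y⁆ ∈ Subgroup.center P
  pow_mem_center : ∀ x : P, x ^ p ∈ Subgroup.center P
  pow_eq_one : p ≠ 2 → ∀ x : P, x ^ p = 1

universe u

theorem heis_key (p : ℕ) (hp : p.Prime) (hodd : p ≠ 2) (N : ℕ) :
    ∀ (P : Type u) [Group P] [Finite P], Nat.card P = N →
      IsHeisenberg p P → ∀ z : P, z ∈ Subgroup.center P → z ≠ 1 →
      ∃ (n : ℕ) (φ : P ≃* Heis p n), φ z = ⟨0, 0, 1⟩ := by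
  induction N using Nat.strong_induction_on with
  | _ N ih =>
  intro P _ _ hcard hP z hz hz1
  haveI : Fact p.Prime := ⟨hp⟩
  haveI : NeZero p := ⟨hp.pos.ne'⟩
  haveI : Fact (1 < p) := ⟨hp.one_lt⟩
  have hexp : ∀ g : P, g ^ p = 1 := hP.pow_eq_one hodd
  have hc := hP.commutator_mem
  have hoz : orderOf z = p := orderOf_eq_prime (hexp z) hz1
  have hZ : Subgroup.zpowers z = Subgroup.center P := by
    apply Subgroup.eq_of_le_of_card_ge (Subgroup.zpowers_le.mpr hz)
    rw [hP.card_center, Nat.card_zpowers, hoz]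
  have hmem : ∀ w : P, w ∈ Subgroup.center P → ∃ i : ℕ, i < p ∧ z ^ i = w := by
    intro w hw
    rw [← hZ] at hw
    obtain ⟨i, hi⟩ := mem_powers_iff_mem_zpowers.mpr hw
    exact ⟨i % p, Nat.mod_lt _ hp.pos, by rw [← pow_eq_pow_mod i (hexp z)]; exact hi⟩
  have hvadd : ∀ (g : P), g ^ p = 1 → ∀ s t : ZMod p, g ^ (s + t).val = g ^ s.val * g ^ t.val := by
    intro g hg s t
    rw [ZMod.val_add, ← pow_eq_pow_mod _ hg, pow_add]
  by_cases hab : ∀ g : P, g ∈ Subgroup.center P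
  · -- abelian case : P has order p
    have hcardP : Nat.card P = p := by
      have htop : Subgroup.center P = ⊤ := by
        rw [Subgroup.eq_top_iff']; exact hab
      rw [← hP.card_center, htop, Subgroup.card_top]
    let Ψ : Heis p 0 →* P :=
      { toFun := fun u => z ^ u.c.val
        map_one' := by
          show z ^ (0 : ZMod p).val = 1
          rw [ZMod.val_zero, pow_zero]
        map_mul' := by
          intro u v
          show z ^ ((u * v).c).val = z ^ u.c.val * z ^ v.c.val
          rw [Heis.mul_def]
          dsimp only
          rw [Finset.univ_eq_empty, Finset.sum_empty, sub_zero, hvadd z (hexp z)]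
        }
    have hinj : Function.Injective Ψ := by
      intro u v h
      have h' : z ^ u.c.val = z ^ v.c.val := h
      have hval := pow_injOn_Iio_orderOf
        (by rw [hoz]; exact Set.mem_Iio.mpr (ZMod.val_lt _))
        (by rw [hoz]; exact Set.mem_Iio.mpr (ZMod.val_lt _)) h'
      exact Heis.ext (funext fun i => i.elim0) (funext fun i => i.elim0)
        (ZMod.val_injective p hval)
    have hbijΨ : Function.Bijective Ψ :=
      (Nat.bijective_iff_injective_and_card Ψ).mpr ⟨hinj, by
        rw [Heis.card hp.pos, hcardP, pow_one]⟩
    let e := MulEquiv.ofBijective Ψ hbijΨ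
    refine ⟨0, e.symm, ?_⟩
    rw [MulEquiv.symm_apply_eq]
    show z = z ^ (1 : ZMod p).val
    rw [ZMod.val_one, pow_one]
  · -- nonabelian case
    push_neg at hab
    obtain ⟨x, hx⟩ := hab
    -- find y with ⁅x, y⁆ = z
    obtain ⟨y, hxy⟩ : ∃ y : P, ⁅x, y⁆ = z := by
      have hy0 : ∃ y₀ : P, ⁅x, y₀⁆ ≠ 1 := by
        by_contra h
        push_neg at h
        exact hx (Subgroup.mem_center_iff.mpr fun g =>
          ((commutatorElement_eq_one_iff_commute.mp (h g)).symm : Commute g x))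
      obtain ⟨y₀, hy₀⟩ := hy0
      obtain ⟨i, hip, hzi⟩ := hmem ⁅x, y₀⁆ (hc x y₀)
      have hio : (i : ZMod p) ≠ 0 := by
        intro h
        obtain ⟨j, rfl⟩ := (ZMod.natCast_eq_zero_iff i p).mp h
        apply hy₀
        rw [← hzi, pow_mul, hexp, one_pow]
      refine ⟨y₀ ^ ((i : ZMod p)⁻¹).val, ?_⟩
      rw [comm_pow_right hc, ← hzi, ← pow_mul]
      have h1 : ((i * ((i : ZMod p)⁻¹).val : ℕ) : ZMod p) = ((1 : ℕ) : ZMod p) := by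
        push_cast
        rw [ZMod.natCast_rightInverse ((i : ZMod p)⁻¹), mul_inv_cancel₀ hio]
      have h2 := (ZMod.natCast_eq_natCast_iff _ _ _).mp h1
      calc z ^ (i * ((i : ZMod p)⁻¹).val) = z ^ 1 := by
            rw [pow_eq_pow_iff_modEq, hoz]; exact h2
      _ = z := pow_one z
    set K := Subgroup.centralizer ({x, y} : Set P) with hK
    have hxK : ∀ k : P, k ∈ K ↔ x * k = k * x ∧ y * k = k * y := by
      intro k
      rw [Subgroup.mem_centralizer_iff]
      constructor
      · intro h; exact ⟨h x (by simp), h y (by simp)⟩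
      · rintro ⟨h1, h2⟩ g hg
        rcases hg with rfl | hg
        · exact h1
        · rw [Set.mem_singleton_iff] at hg; subst hg; exact h2
    have hxK' : ∀ k : P, k ∈ K ↔ ⁅x, k⁆ = 1 ∧ ⁅y, k⁆ = 1 := by
      intro k
      rw [hxK k, commutatorElement_eq_one_iff_commute, commutatorElement_eq_one_iff_commute]
      exact Iff.rfl
    have hzK : z ∈ K := Subgroup.center_le_centralizer _ hz
    -- decomposition
    have hyx : ⁅y, x⁆ = z⁻¹ := by rw [← commutatorElement_inv, hxy]
    have hdecomp : ∀ g : P, ∃ (a b : ℕ) (k : P),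
        a < p ∧ b < p ∧ k ∈ K ∧ g = x ^ a * y ^ b * k := by
      intro g
      obtain ⟨b, hbp, hb⟩ := hmem ⁅x, g⁆ (hc x g)
      obtain ⟨a, hap, ha⟩ := hmem ⁅g, y⁆ (hc g y)
      refine ⟨a, b, (x ^ a * y ^ b)⁻¹ * g, hap, hbp, ?_, by group⟩
      rw [hxK']
      constructor
      · rw [comm_mul_right hc, comm_inv_right hc, comm_mul_right hc, comm_pow_right hc,
          comm_pow_right hc, hxy, ← hb]
        simp
      · rw [comm_mul_right hc, comm_inv_right hc, comm_mul_right hc, comm_pow_right hc,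
          comm_pow_right hc, hyx]
        have h2 : ⁅y, g⁆ = (z ^ a)⁻¹ := by rw [← commutatorElement_inv, ← ha]
        rw [h2]
        simp [inv_pow]
    have hext : ∀ (a b : ℕ) (k : P), k ∈ K →
        ⁅x, x ^ a * y ^ b * k⁆ = z ^ b ∧ ⁅x ^ a * y ^ b * k, y⁆ = z ^ a := by
      intro a b k hk
      obtain ⟨hk1, hk2⟩ := (hxK' k).mp hk
      constructor
      · rw [comm_mul_right hc, comm_mul_right hc, comm_pow_right hc, comm_pow_right hc,
          hxy, hk1]
        simp
      · rw [← commutatorElement_inv, comm_mul_right hc, comm_mul_right hc,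
          comm_pow_right hc, comm_pow_right hc, hk2, hyx]
        simp [inv_pow]
    have huniq : ∀ (a b a' b' : ℕ) (k k' : P), a < p → b < p → a' < p → b' < p →
        k ∈ K → k' ∈ K → x ^ a * y ^ b * k = x ^ a' * y ^ b' * k' →
        a = a' ∧ b = b' ∧ k = k' := by
      intro a b a' b' k k' hap hbp hap' hbp' hk hk' heq
      have e1 := (hext a b k hk).1
      rw [heq, (hext a' b' k' hk').1] at e1
      have e2 := (hext a b k hk).2
      rw [heq, (hext a' b' k' hk').2] at e2
      have hb : b' = b := pow_injOn_Iio_orderOf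
        (by rw [hoz]; exact Set.mem_Iio.mpr hbp') (by rw [hoz]; exact Set.mem_Iio.mpr hbp) e1
      have ha : a' = a := pow_injOn_Iio_orderOf
        (by rw [hoz]; exact Set.mem_Iio.mpr hap') (by rw [hoz]; exact Set.mem_Iio.mpr hap) e2
      subst hb; subst ha
      exact ⟨rfl, rfl, mul_left_cancel heq⟩
    have hbij : Function.Bijective
        (fun t : Fin p × Fin p × K => x ^ (t.1 : ℕ) * y ^ (t.2.1 : ℕ) * (t.2.2 : P)) := by
      constructor
      · rintro ⟨a, b, k⟩ ⟨a', b', k'⟩ h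
        obtain ⟨h1, h2, h3⟩ := huniq _ _ _ _ _ _ a.isLt b.isLt a'.isLt b'.isLt k.2 k'.2 h
        exact Prod.ext (Fin.ext h1) (Prod.ext (Fin.ext h2) (Subtype.ext h3))
      · intro g
        obtain ⟨a, b, k, hap, hbp, hk, rfl⟩ := hdecomp g
        exact ⟨⟨⟨a, hap⟩, ⟨b, hbp⟩, ⟨k, hk⟩⟩, rfl⟩
    have hcardP : Nat.card P = p * (p * Nat.card K) := by
      rw [← Nat.card_eq_of_bijective _ hbij, Nat.card_prod, Nat.card_prod]
      simp [Nat.card_eq_fintype_card]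
    -- K is Heisenberg
    have hcenterK : ∀ k : K, k ∈ Subgroup.center K ↔ (k : P) ∈ Subgroup.center P := by
      intro k
      constructor
      · intro hk
        rw [Subgroup.mem_center_iff]
        intro g
        obtain ⟨a, b, k1, _, _, hk1, rfl⟩ := hdecomp g
        have cx : Commute (k : P) x := (((hxK _).mp k.2).1).symm
        have cy : Commute (k : P) y := (((hxK _).mp k.2).2).symm
        have ck1 : Commute (k : P) k1 := by
          have h := Subgroup.mem_center_iff.mp hk ⟨k1, hk1⟩
          exact (congrArg Subtype.val h).symm
        exact (((cx.pow_right a).mul_right (cy.pow_right b)).mul_right ck1).symm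
      · intro hk
        rw [Subgroup.mem_center_iff]
        intro g
        exact Subtype.ext (Subgroup.mem_center_iff.mp hk (g : P))
    have hKheis : IsHeisenberg p K := by
      refine ⟨?_, ?_, ?_, ?_⟩
      · have e : Subgroup.center K ≃ Subgroup.center P :=
          { toFun := fun w => ⟨((w : K) : P), (hcenterK _).mp w.2⟩
            invFun := fun w => ⟨⟨(w : P), Subgroup.center_le_centralizer _ w.2⟩,
              (hcenterK _).mpr w.2⟩
            left_inv := fun w => rfl
            right_inv := fun w => rfl }
        rw [Nat.card_congr e, hP.card_center]
      · intro k k'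
        rw [hcenterK]
        exact hc _ _
      · intro k
        have h1 : k ^ p = 1 := Subtype.ext (by
          rw [SubmonoidClass.coe_pow]
          exact (hexp _).trans (OneMemClass.coe_one _).symm)
        rw [h1]
        exact Subgroup.one_mem _
      · intro _ k
        exact Subtype.ext (by
          rw [SubmonoidClass.coe_pow]
          exact (hexp _).trans (OneMemClass.coe_one _).symm)
    have hKlt : Nat.card K < N := by
      have hKpos : 0 < Nat.card K := Nat.card_pos
      have h2p : 2 ≤ p := hp.two_le
      rw [← hcard, hcardP]
      have h4 : 2 * (2 * Nat.card K) ≤ p * (p * Nat.card K) :=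
        Nat.mul_le_mul h2p (Nat.mul_le_mul h2p le_rfl)
      omega
    have hzK1 : (⟨z, hzK⟩ : K) ≠ 1 := by
      intro h
      exact hz1 (congrArg Subtype.val h)
    obtain ⟨m, φ, hφz⟩ := ih (Nat.card K) hKlt K rfl hKheis ⟨z, hzK⟩
      ((hcenterK _).mpr hz) hzK1
    -- the homomorphism from the model
    have hKelt : ∀ u v : Heis p (m + 1),
        ((⟨z, hzK⟩ : K)⁻¹) ^ ((v.a 0).val * (u.b 0).val) *
          (φ.symm ⟨Fin.tail u.a, Fin.tail u.b, u.c⟩ *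
           φ.symm ⟨Fin.tail v.a, Fin.tail v.b, v.c⟩) =
        φ.symm ⟨Fin.tail (u.a + v.a), Fin.tail (u.b + v.b),
          u.c + v.c - ∑ i, v.a i * u.b i⟩ := by
      intro u v
      rw [MulEquiv.eq_symm_apply, map_mul, map_pow, map_inv, hφz, map_mul,
        MulEquiv.apply_symm_apply, MulEquiv.apply_symm_apply]
      rw [Heis.c_inv, Heis.c_pow,
        Heis.mul_def ⟨Fin.tail u.a, Fin.tail u.b, u.c⟩ ⟨Fin.tail v.a, Fin.tail v.b, v.c⟩,
        Heis.c_mul]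
      refine Heis.ext rfl rfl ?_
      show (u.c + v.c - ∑ i, Fin.tail v.a i * Fin.tail u.b i) +
        (((v.a 0).val * (u.b 0).val : ℕ) : ZMod p) * (-1) =
        u.c + v.c - ∑ i, v.a i * u.b i
      rw [Fin.sum_univ_succ (f := fun i => v.a i * u.b i)]
      have hcast : (((v.a 0).val * (u.b 0).val : ℕ) : ZMod p) = v.a 0 * u.b 0 := by
        rw [Nat.cast_mul, ZMod.natCast_rightInverse _, ZMod.natCast_rightInverse _]
      rw [hcast]
      simp only [Fin.tail]
      ring
    let Ψ : Heis p (m + 1) →* P :=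
      { toFun := fun u => x ^ (u.a 0).val * y ^ (u.b 0).val *
          ((φ.symm ⟨Fin.tail u.a, Fin.tail u.b, u.c⟩ : K) : P)
        map_one' := by
          show x ^ ((0 : Fin (m + 1) → ZMod p) 0).val * y ^ ((0 : Fin (m + 1) → ZMod p) 0).val *
            ((φ.symm ⟨Fin.tail (0 : Fin (m + 1) → ZMod p),
              Fin.tail (0 : Fin (m + 1) → ZMod p), 0⟩ : K) : P) = 1
          have ht : Fin.tail (0 : Fin (m + 1) → ZMod p) = 0 := rfl
          rw [ht]
          have h1 : (⟨0, 0, 0⟩ : Heis p m) = 1 := rfl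
          rw [h1, map_one]
          simp
        map_mul' := by
          intro u v
          set k : K := φ.symm ⟨Fin.tail u.a, Fin.tail u.b, u.c⟩ with hk
          set k' : K := φ.symm ⟨Fin.tail v.a, Fin.tail v.b, v.c⟩ with hk'
          rw [master hc x y (k : P) (k' : P) (u.a 0).val (u.b 0).val (v.a 0).val (v.b 0).val
            ((hxK _).mp k.2).1.symm ((hxK _).mp k.2).2.symm]
          rw [hyx]
          have hcoe : ((((⟨z, hzK⟩ : K)⁻¹) ^ ((v.a 0).val * (u.b 0).val) * (k * k') : K) : P) =
              (z⁻¹) ^ ((v.a 0).val * (u.b 0).val) * ((k : P) * (k' : P)) := by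
            push_cast
            rfl
          rw [← hcoe, hKelt u v]
          rw [Heis.mul_def]
          dsimp only
          rw [Pi.add_apply, Pi.add_apply, hvadd x (hexp x), hvadd y (hexp y),
            pow_add, pow_add]
          simp only [mul_assoc] }
    have hΨinj : Function.Injective Ψ := by
      intro u v h
      have h' : x ^ (u.a 0).val * y ^ (u.b 0).val *
          ((φ.symm ⟨Fin.tail u.a, Fin.tail u.b, u.c⟩ : K) : P) =
          x ^ (v.a 0).val * y ^ (v.b 0).val *
          ((φ.symm ⟨Fin.tail v.a, Fin.tail v.b, v.c⟩ : K) : P) := h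
      obtain ⟨h1, h2, h3⟩ := huniq _ _ _ _ _ _ (ZMod.val_lt _) (ZMod.val_lt _)
        (ZMod.val_lt _) (ZMod.val_lt _) (φ.symm _).2 (φ.symm _).2 h'
      have hmodel := φ.symm.injective (Subtype.ext h3)
      have hta := congrArg Heis.a hmodel
      have htb := congrArg Heis.b hmodel
      have hcc := congrArg Heis.c hmodel
      refine Heis.ext (funext fun i => ?_) (funext fun i => ?_) hcc
      · exact Fin.cases (motive := fun i => u.a i = v.a i)
          (ZMod.val_injective p h1) (fun j => congrFun hta j) i
      · exact Fin.cases (motive := fun i => u.b i = v.b i)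
          (ZMod.val_injective p h2) (fun j => congrFun htb j) i
    have hcardH : Nat.card (Heis p (m + 1)) = Nat.card P := by
      have hKcard : Nat.card K = p ^ (2 * m + 1) := by
        rw [Nat.card_congr φ.toEquiv, Heis.card hp.pos]
      rw [Heis.card hp.pos, hcardP, hKcard]
      ring
    have hbijΨ : Function.Bijective Ψ :=
      (Nat.bijective_iff_injective_and_card Ψ).mpr ⟨hΨinj, hcardH⟩
    let e := MulEquiv.ofBijective Ψ hbijΨ
    refine ⟨m + 1, e.symm, ?_⟩
    rw [MulEquiv.symm_apply_eq]
    show z = x ^ ((0 : Fin (m + 1) → ZMod p) 0).val * y ^ ((0 : Fin (m + 1) → ZMod p) 0).val *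
      ((φ.symm ⟨Fin.tail (0 : Fin (m + 1) → ZMod p),
        Fin.tail (0 : Fin (m + 1) → ZMod p), 1⟩ : K) : P)
    have ht : Fin.tail (0 : Fin (m + 1) → ZMod p) = 0 := rfl
    rw [ht]
    have hsymm : φ.symm ⟨0, 0, 1⟩ = (⟨z, hzK⟩ : K) := by
      rw [← hφz, MulEquiv.symm_apply_apply]
    rw [hsymm]
    simp

/-- For an odd prime `p`, any two Heisenberg `𝔽_p`-groups of the same
cardinality are isomorphic. -/
theorem stmt_3 (p : ℕ) (hp : p.Prime) (hodd : p ≠ 2)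
    (P : Type*) [Group P] [Finite P] (Q : Type*) [Group Q] [Finite Q]
    (hP : IsHeisenberg p P) (hQ : IsHeisenberg p Q)
    (hcard : Nat.card P = Nat.card Q) :
    Nonempty (P ≃* Q) := by
  have hcP : (1 : ℕ) < Nat.card (Subgroup.center P) := by
    rw [hP.card_center]; exact hp.one_lt
  have hcQ : (1 : ℕ) < Nat.card (Subgroup.center Q) := by
    rw [hQ.card_center]; exact hp.one_lt
  haveI := Finite.one_lt_card_iff_nontrivial.mp hcP
  haveI := Finite.one_lt_card_iff_nontrivial.mp hcQ
  obtain ⟨w, hw⟩ := exists_ne (1 : Subgroup.center P)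
  obtain ⟨w', hw'⟩ := exists_ne (1 : Subgroup.center Q)
  obtain ⟨n, φ, -⟩ := heis_key p hp hodd (Nat.card P) P rfl hP (w : P) w.2
    (fun h => hw (OneMemClass.coe_eq_one.mp h))
  obtain ⟨n', ψ, -⟩ := heis_key p hp hodd (Nat.card Q) Q rfl hQ (w' : Q) w'.2
    (fun h => hw' (OneMemClass.coe_eq_one.mp h))
  have c1 : Nat.card P = p ^ (2 * n + 1) := by
    rw [Nat.card_congr φ.toEquiv, Heis.card hp.pos]
  have c2 : Nat.card Q = p ^ (2 * n' + 1) := by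
    rw [Nat.card_congr ψ.toEquiv, Heis.card hp.pos]
  have hee : 2 * n + 1 = 2 * n' + 1 :=
    Nat.pow_right_injective hp.two_le (by
      show p ^ (2 * n + 1) = p ^ (2 * n' + 1)
      rw [← c1, ← c2, hcard])
  have hnn : n = n' := by omega
  subst hnn
  exact ⟨φ.trans ψ.symm⟩
end

section
/- (Stone–von Neumann theorem) Let p be a prime, let P be a Heisenberg 𝔽_p-group, and let ψ : Z(P) → ℂˣ be a nontrivial group homomorphism. Then there exists an irreducible complex representation ω_ψ of P on which every z ∈ Z(P) acts by the scalar ψ(z); any two such representations are isomorphic; and (dim ω_ψ)² = |P/Z(P)|. -/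
universe u

open scoped commutatorElement

/-- A complex representation is irreducible if the space is nonzero and the
only invariant submodules are `⊥` and `⊤`. -/
def IsIrrep {G : Type*} [Group G] {V : Type*} [AddCommGroup V] [Module ℂ V]
    (ρ : Representation ℂ G V) : Prop :=
  Nontrivial V ∧
    ∀ W : Submodule ℂ V, (∀ (g : G) (v : V), v ∈ W → ρ g v ∈ W) → W = ⊥ ∨ W = ⊤

/-- `ρ` has central character `ψ`: every element `z` of the center acts by the
scalar `ψ z`. -/
def HasCentralCharacter {P : Type*} [Group P] {V : Type*} [AddCommGroup V]
    [Module ℂ V] (ρ : Representation ℂ P V)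
    (ψ : ↥(Subgroup.center P) →* ℂˣ) : Prop :=
  ∀ z : ↥(Subgroup.center P),
    ρ (z : P) = (((ψ z : ℂˣ) : ℂ) • LinearMap.id : V →ₗ[ℂ] V)

open LinearMap TensorProduct

/-! ### Trace of the conjugation operator on Hom spaces -/

section ConjHom

variable {V : Type*} {V' : Type u} [AddCommGroup V] [Module ℂ V] [AddCommGroup V'] [Module ℂ V']

/-- The operator `f ↦ B ∘ f ∘ C` on a Hom space. -/
noncomputable def conjHom (B : V' →ₗ[ℂ] V') (C : V →ₗ[ℂ] V) :
    (V →ₗ[ℂ] V') →ₗ[ℂ] (V →ₗ[ℂ] V') where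
  toFun f := B ∘ₗ f ∘ₗ C
  map_add' f g := by ext x; simp
  map_smul' c f := by ext x; simp

@[simp] lemma conjHom_apply (B : V' →ₗ[ℂ] V') (C : V →ₗ[ℂ] V) (f : V →ₗ[ℂ] V') :
    conjHom B C f = B ∘ₗ f ∘ₗ C := rfl

lemma trace_conjHom [FiniteDimensional ℂ V] [FiniteDimensional ℂ V']
    (B : V' →ₗ[ℂ] V') (C : V →ₗ[ℂ] V) :
    trace ℂ (V →ₗ[ℂ] V') (conjHom B C) = trace ℂ V C * trace ℂ V' B := by
  let e := dualTensorHomEquiv ℂ V V'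
  have key : conjHom B C = e.conj (TensorProduct.map (Module.Dual.transpose (R := ℂ) C) B) := by
    have h : (conjHom B C) ∘ₗ (e : Module.Dual ℂ V ⊗[ℂ] V' →ₗ[ℂ] (V →ₗ[ℂ] V'))
        = (e : Module.Dual ℂ V ⊗[ℂ] V' →ₗ[ℂ] (V →ₗ[ℂ] V')) ∘ₗ
          TensorProduct.map (Module.Dual.transpose (R := ℂ) C) B := by
      apply TensorProduct.ext'
      intro φ v'
      ext x
      simp [e, dualTensorHomEquiv, Module.Dual.transpose_apply]
    refine LinearMap.ext fun f => ?_
    rw [LinearEquiv.conj_apply]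
    have := LinearMap.congr_fun h (e.symm f)
    simpa using this
  rw [key, trace_conj', trace_tensorProduct', trace_transpose']

end ConjHom

/-! ### Group-theoretic lemmas for Heisenberg groups -/

section Heis

variable {p : ℕ} {P : Type*} [Group P]

lemma Heis.exists_commutator (hp : p.Prime) (hP : IsHeisenberg p P) {x : P}
    (hx : x ∉ Subgroup.center P) (z : ↥(Subgroup.center P)) :
    ∃ g : P, ⁅g, x⁆ = (z : P) := by
  have hcomm : ∀ g h : P, ⁅g * h, x⁆ = ⁅g, x⁆ * ⁅h, x⁆ := by
    intro g h
    have hc := Subgroup.mem_center_iff.1 (hP.commutator_mem h x)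
    calc ⁅g * h, x⁆ = g * (h * x * h⁻¹) * g⁻¹ * x⁻¹ := by group
      _ = g * (⁅h, x⁆ * x) * g⁻¹ * x⁻¹ := by rw [show h * x * h⁻¹ = ⁅h, x⁆ * x by group]
      _ = (g * ⁅h, x⁆) * x * g⁻¹ * x⁻¹ := by simp [mul_assoc]
      _ = (⁅h, x⁆ * g) * x * g⁻¹ * x⁻¹ := by rw [hc g]
      _ = ⁅h, x⁆ * ⁅g, x⁆ := by group
      _ = ⁅g, x⁆ * ⁅h, x⁆ := (hc _).symm
  let φ : P →* ↥(Subgroup.center P) :=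
    { toFun := fun g => ⟨⁅g, x⁆, hP.commutator_mem g x⟩
      map_one' := by ext; simp
      map_mul' := fun g h => by ext; exact hcomm g h }
  haveI : Fact (Nat.card ↥(Subgroup.center P)).Prime := ⟨hP.card_center ▸ hp⟩
  rcases Subgroup.eq_bot_or_eq_top_of_prime_card φ.range with hr | hr
  · exfalso
    apply hx
    rw [Subgroup.mem_center_iff]
    intro g
    have hm : φ g ∈ φ.range := ⟨g, rfl⟩
    rw [hr, Subgroup.mem_bot] at hm
    exact commutatorElement_eq_one_iff_mul_comm.1 (congrArg Subtype.val hm)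
  · have hm : z ∈ φ.range := hr ▸ Subgroup.mem_top z
    rcases hm with ⟨g, hg⟩
    exact ⟨g, congrArg Subtype.val hg⟩

lemma Heis.exists_char_ne_one {ψ : ↥(Subgroup.center P) →* ℂˣ} (hψ : ψ ≠ 1) :
    ∃ z : ↥(Subgroup.center P), ((ψ z : ℂˣ) : ℂ) ≠ 1 := by
  by_contra h
  push_neg at h
  exact hψ (MonoidHom.ext fun z => Units.ext (h z))

end Heis

/-! ### Character values -/

section Traces

variable {p : ℕ} {P : Type*} [Group P] {V : Type u} [AddCommGroup V] [Module ℂ V]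
  {ψ : ↥(Subgroup.center P) →* ℂˣ}

lemma trace_center (ρ : Representation ℂ P V) [FiniteDimensional ℂ V]
    (hρ : HasCentralCharacter ρ ψ) (z : ↥(Subgroup.center P)) :
    trace ℂ V (ρ (z : P)) = ((ψ z : ℂˣ) : ℂ) * (Module.finrank ℂ V : ℂ) := by
  rw [hρ z, map_smul, trace_id, smul_eq_mul]

lemma trace_off_center (hp : p.Prime) (hP : IsHeisenberg p P) (hψ : ψ ≠ 1)
    (ρ : Representation ℂ P V) [FiniteDimensional ℂ V]
    (hρ : HasCentralCharacter ρ ψ) {x : P} (hx : x ∉ Subgroup.center P) :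
    trace ℂ V (ρ x) = 0 := by
  obtain ⟨z₀, hz₀⟩ := Heis.exists_char_ne_one hψ
  obtain ⟨g, hg⟩ := Heis.exists_commutator hp hP hx z₀
  have hgx : g * x * g⁻¹ = (z₀ : P) * x := by rw [← hg]; group
  have h1 : trace ℂ V (ρ (g * x * g⁻¹)) = trace ℂ V (ρ x) := by
    have hsplit : ρ (g * x * g⁻¹) = ρ g * ρ x * ρ g⁻¹ := by rw [map_mul, map_mul]
    rw [hsplit, LinearMap.trace_mul_comm, ← mul_assoc, ← map_mul, inv_mul_cancel, map_one, one_mul]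
  have h2 : trace ℂ V (ρ ((z₀ : P) * x)) = ((ψ z₀ : ℂˣ) : ℂ) * trace ℂ V (ρ x) := by
    rw [map_mul, hρ z₀]
    have : (((ψ z₀ : ℂˣ) : ℂ) • LinearMap.id : V →ₗ[ℂ] V) * ρ x
        = ((ψ z₀ : ℂˣ) : ℂ) • ρ x := by ext v; simp
    rw [this, map_smul, smul_eq_mul]
  rw [hgx, h2] at h1
  have hzero : (((ψ z₀ : ℂˣ) : ℂ) - 1) * trace ℂ V (ρ x) = 0 := by linear_combination h1
  rcases mul_eq_zero.1 hzero with h | h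
  · exact absurd (sub_eq_zero.1 h) hz₀
  · exact h

lemma fd_of_irrep [Finite P] (ω' : Representation ℂ P V) (h : IsIrrep ω') :
    FiniteDimensional ℂ V := by
  obtain ⟨hnt, hsub⟩ := h
  obtain ⟨v, hv⟩ := exists_ne (0 : V)
  set W := Submodule.span ℂ (Set.range fun g : P => ω' g v) with hWdef
  have hinv : ∀ (g : P) (w : V), w ∈ W → ω' g w ∈ W := by
    intro g w hw
    have hle : Submodule.map (ω' g) W ≤ W := by
      rw [hWdef, Submodule.map_span]
      refine Submodule.span_le.2 ?_
      rintro _ ⟨_, ⟨x, rfl⟩, rfl⟩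
      refine Submodule.subset_span ⟨g * x, ?_⟩
      simp [map_mul]
    exact hle ⟨w, hw, rfl⟩
  have hW : W = ⊤ := by
    rcases hsub W hinv with h | h
    · exfalso
      have hvW : v ∈ W := Submodule.subset_span ⟨1, by simp⟩
      rw [h] at hvW
      exact hv (by simpa using hvW)
    · exact h
  exact ⟨by rw [← hW]; exact Submodule.fg_span (Set.finite_range _)⟩

end Traces

/-! ### The averaging operator -/

section Avg

variable {p : ℕ} {P : Type*} [Group P] [Fintype P]
variable {V : Type*} [AddCommGroup V] [Module ℂ V]
variable {V' : Type u} [AddCommGroup V'] [Module ℂ V']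
variable {ψ : ↥(Subgroup.center P) →* ℂˣ}

/-- Averaging operator turning any linear map into an intertwiner. -/
noncomputable def avg (ω : Representation ℂ P V) (ω' : Representation ℂ P V') :
    (V →ₗ[ℂ] V') →ₗ[ℂ] (V →ₗ[ℂ] V') :=
  (Nat.card P : ℂ)⁻¹ • ∑ g : P, conjHom (ω' g) (ω g⁻¹)

lemma avg_apply (ω : Representation ℂ P V) (ω' : Representation ℂ P V') (f : V →ₗ[ℂ] V') :
    avg ω ω' f = (Nat.card P : ℂ)⁻¹ • ∑ g : P, ω' g ∘ₗ f ∘ₗ ω g⁻¹ := by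
  simp [avg, LinearMap.sum_apply]

lemma avg_intertwine (ω : Representation ℂ P V) (ω' : Representation ℂ P V')
    (f : V →ₗ[ℂ] V') (h : P) :
    ω' h ∘ₗ avg ω ω' f = avg ω ω' f ∘ₗ ω h := by
  ext v
  simp only [avg_apply, coe_comp, Function.comp_apply, LinearMap.smul_apply, map_smul,
    LinearMap.sum_apply, map_sum]
  congr 1
  refine Fintype.sum_equiv (Equiv.mulLeft h) _ _ fun g => ?_
  simp only [Equiv.coe_mulLeft]
  have h1 : ω' h (ω' g (f (ω g⁻¹ v))) = ω' (h * g) (f (ω g⁻¹ v)) := by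
    rw [map_mul]; rfl
  have h2 : ω (h * g)⁻¹ (ω h v) = ω g⁻¹ v := by
    rw [← Module.End.mul_apply, ← map_mul]
    congr 1
    group
  rw [h1, h2]

lemma trace_avg (hp : p.Prime) (hP : IsHeisenberg p P) (hψ : ψ ≠ 1)
    (ω : Representation ℂ P V) (ω' : Representation ℂ P V')
    [FiniteDimensional ℂ V] [FiniteDimensional ℂ V']
    (hω : HasCentralCharacter ω ψ) (hω' : HasCentralCharacter ω' ψ) :
    trace ℂ _ (avg ω ω') = (Nat.card P : ℂ)⁻¹ *
      (p * ((Module.finrank ℂ V : ℂ) * (Module.finrank ℂ V' : ℂ))) := by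
  classical
  rw [avg, map_smul, map_sum, smul_eq_mul]
  congr 1
  have hterm : ∀ g : P, trace ℂ _ (conjHom (ω' g) (ω g⁻¹))
      = trace ℂ V (ω g⁻¹) * trace ℂ V' (ω' g) := fun g => trace_conjHom _ _
  rw [Finset.sum_congr rfl fun g _ => hterm g]
  have h0 : ∀ g ∈ Finset.univ, trace ℂ V (ω g⁻¹) * trace ℂ V' (ω' g) ≠ 0 →
      g ∈ Subgroup.center P := by
    intro g _ hne
    by_contra hg
    exact hne (by rw [trace_off_center hp hP hψ ω' hω' hg, mul_zero])
  rw [← Finset.sum_filter_of_ne h0]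
  haveI : Fintype ↥(Subgroup.center P) := Fintype.ofFinite _
  rw [Finset.sum_subtype (p := fun x => x ∈ Subgroup.center P) _ (by simp)
    (fun g => trace ℂ V (ω g⁻¹) * trace ℂ V' (ω' g))]
  have hval : ∀ z : ↥(Subgroup.center P),
      trace ℂ V (ω ((z : P))⁻¹) * trace ℂ V' (ω' (z : P))
        = (Module.finrank ℂ V : ℂ) * (Module.finrank ℂ V' : ℂ) := by
    intro z
    have hz : ((z : P))⁻¹ = ((z⁻¹ : ↥(Subgroup.center P)) : P) := rfl
    rw [hz, trace_center ω hω z⁻¹, trace_center ω' hω' z, map_inv]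
    have hu : ((((ψ z)⁻¹ : ℂˣ) : ℂ)) * ((ψ z : ℂˣ) : ℂ) = 1 := by
      rw [← Units.val_mul, inv_mul_cancel, Units.val_one]
    calc (((ψ z)⁻¹ : ℂˣ) : ℂ) * (Module.finrank ℂ V : ℂ)
          * (((ψ z : ℂˣ) : ℂ) * (Module.finrank ℂ V' : ℂ))
        = ((((ψ z)⁻¹ : ℂˣ) : ℂ) * ((ψ z : ℂˣ) : ℂ))
          * ((Module.finrank ℂ V : ℂ) * (Module.finrank ℂ V' : ℂ)) := by ring
      _ = (Module.finrank ℂ V : ℂ) * (Module.finrank ℂ V' : ℂ) := by rw [hu, one_mul]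
  rw [Finset.sum_congr rfl fun z _ => hval z, Finset.sum_const, Finset.card_univ]
  rw [← Nat.card_eq_fintype_card, hP.card_center, nsmul_eq_mul]

end Avg

/-! ### Schur's lemma and consequences -/

section Schur

variable {p : ℕ} {P : Type*} [Group P] [Fintype P]
variable {V : Type*} [AddCommGroup V] [Module ℂ V]
variable {V' : Type u} [AddCommGroup V'] [Module ℂ V']
variable {ψ : ↥(Subgroup.center P) →* ℂˣ}

lemma trace_complex (f : ℂ →ₗ[ℂ] ℂ) : trace ℂ ℂ f = f 1 := by
  have hf : f = (f 1) • LinearMap.id := by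
    refine LinearMap.ext fun c => ?_
    simpa [mul_comm] using (f.map_smul c 1)
  rw [hf]
  simp

lemma schur_scalar (ω : Representation ℂ P V) [FiniteDimensional ℂ V]
    (hirr : IsIrrep ω) (T : V →ₗ[ℂ] V) (hT : ∀ h : P, ω h ∘ₗ T = T ∘ₗ ω h) :
    T = (((Module.finrank ℂ V : ℂ))⁻¹ * trace ℂ V T) • LinearMap.id := by
  haveI : Nontrivial V := hirr.1
  obtain ⟨μ, hμ⟩ := Module.End.exists_eigenvalue T
  obtain ⟨v, hv⟩ := hμ.exists_hasEigenvector
  have hinvk : ∀ (g : P) (w : V), w ∈ ker (T - μ • LinearMap.id) →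
      ω g w ∈ ker (T - μ • LinearMap.id) := by
    intro g w hw
    rw [mem_ker] at hw ⊢
    have hcomm : (T - μ • LinearMap.id) ∘ₗ ω g = ω g ∘ₗ (T - μ • LinearMap.id) := by
      ext u
      simp only [coe_comp, Function.comp_apply, LinearMap.sub_apply, LinearMap.smul_apply, id_apply, map_sub,
        map_smul]
      rw [show T (ω g u) = ω g (T u) from LinearMap.congr_fun (hT g).symm u]
    have happ := LinearMap.congr_fun hcomm w
    simp only [coe_comp, Function.comp_apply] at happ
    rw [happ, hw, map_zero]
  have hker : ker (T - μ • LinearMap.id) = ⊤ := by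
    rcases hirr.2 (ker (T - μ • LinearMap.id)) hinvk with h | h
    · exfalso
      have hvmem : v ∈ ker (T - μ • LinearMap.id) := by
        rw [mem_ker, LinearMap.sub_apply, LinearMap.smul_apply, id_apply, sub_eq_zero]
        exact hv.apply_eq_smul
      rw [h, Submodule.mem_bot] at hvmem
      exact hv.2 hvmem
    · exact h
  have hT0 : T - μ • LinearMap.id = 0 := ker_eq_top.1 hker
  have hTμ : T = μ • LinearMap.id := by rwa [sub_eq_zero] at hT0
  have htr : trace ℂ V T = μ * (Module.finrank ℂ V : ℂ) := by
    rw [hTμ, map_smul, trace_id, smul_eq_mul]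
  have hd : (Module.finrank ℂ V : ℂ) ≠ 0 := by
    exact Nat.cast_ne_zero.2 (Module.finrank_pos (R := ℂ) (M := V)).ne'
  rw [htr, hTμ]
  congr 1
  field_simp

lemma trace_avg_self (ω : Representation ℂ P V) [FiniteDimensional ℂ V]
    (hirr : IsIrrep ω) : trace ℂ _ (avg ω ω) = 1 := by
  haveI : Nontrivial V := hirr.1
  have hd : (Module.finrank ℂ V : ℂ) ≠ 0 := by
    exact Nat.cast_ne_zero.2 (Module.finrank_pos (R := ℂ) (M := V)).ne'
  have hcard : (Nat.card P : ℂ) ≠ 0 := Nat.cast_ne_zero.2 Nat.card_pos.ne'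
  have hform : avg ω ω = (toSpanSingleton ℂ (V →ₗ[ℂ] V) LinearMap.id) ∘ₗ
      (((Module.finrank ℂ V : ℂ))⁻¹ • trace ℂ V) := by
    apply LinearMap.ext; intro f
    have hsc := schur_scalar ω hirr (avg ω ω f) (avg_intertwine ω ω f)
    have htr : trace ℂ V (avg ω ω f) = trace ℂ V f := by
      rw [avg_apply, map_smul, map_sum, smul_eq_mul]
      have hconst : ∀ g : P, trace ℂ V (ω g ∘ₗ f ∘ₗ ω g⁻¹) = trace ℂ V f := by
        intro g
        rw [trace_comp_comm', comp_assoc]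
        have : ω g⁻¹ ∘ₗ ω g = LinearMap.id := by
          rw [← Module.End.mul_eq_comp, ← map_mul, inv_mul_cancel, map_one]; rfl
        rw [this, comp_id]
      rw [Finset.sum_congr rfl fun g _ => hconst g, Finset.sum_const, Finset.card_univ,
        nsmul_eq_mul, ← Nat.card_eq_fintype_card]
      field_simp
    rw [hsc, htr]
    simp [toSpanSingleton_apply]
  rw [hform, trace_comp_comm', trace_complex]
  simp only [coe_comp, Function.comp_apply, toSpanSingleton_apply, one_smul, LinearMap.smul_apply,
    smul_eq_mul, trace_id]
  field_simp

end Schur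

/-! ### Uniqueness and dimension -/

section Main

variable {p : ℕ} {P : Type*} [Group P] [Finite P]
variable {V : Type*} [AddCommGroup V] [Module ℂ V]
variable {V' : Type u} [AddCommGroup V'] [Module ℂ V']
variable {ψ : ↥(Subgroup.center P) →* ℂˣ}

lemma exists_equiv (hp : p.Prime) (hP : IsHeisenberg p P) (hψ : ψ ≠ 1)
    (ω : Representation ℂ P V) [FiniteDimensional ℂ V]
    (hirr : IsIrrep ω) (hω : HasCentralCharacter ω ψ)
    (ω' : Representation ℂ P V') (hirr' : IsIrrep ω') (hω' : HasCentralCharacter ω' ψ) :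
    ∃ e : V ≃ₗ[ℂ] V', ∀ (g : P) (v : V), e (ω g v) = ω' g (e v) := by
  haveI : FiniteDimensional ℂ V' := fd_of_irrep ω' hirr'
  haveI : Fintype P := Fintype.ofFinite P
  haveI : Nontrivial V := hirr.1
  haveI : Nontrivial V' := hirr'.1
  have hd : (Module.finrank ℂ V : ℂ) ≠ 0 := by
    exact Nat.cast_ne_zero.2 (Module.finrank_pos (R := ℂ) (M := V)).ne'
  have hd' : (Module.finrank ℂ V' : ℂ) ≠ 0 := by
    exact Nat.cast_ne_zero.2 (Module.finrank_pos (R := ℂ) (M := V')).ne'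
  have hcard : (Nat.card P : ℂ) ≠ 0 := Nat.cast_ne_zero.2 Nat.card_pos.ne'
  have hpne : (p : ℂ) ≠ 0 := Nat.cast_ne_zero.2 hp.pos.ne'
  have htr := trace_avg hp hP hψ ω ω' hω hω'
  have hAne : avg ω ω' ≠ 0 := by
    intro h0
    rw [h0, map_zero] at htr
    exact (mul_ne_zero (inv_ne_zero hcard) (mul_ne_zero hpne (mul_ne_zero hd hd'))) htr.symm
  obtain ⟨f, hf⟩ : ∃ f, avg ω ω' f ≠ 0 := by
    by_contra h
    push_neg at h
    exact hAne (LinearMap.ext fun f => by rw [h f]; rfl)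
  set T := avg ω ω' f with hT
  have hint : ∀ h : P, ω' h ∘ₗ T = T ∘ₗ ω h := avg_intertwine ω ω' f
  have hkerinv : ∀ (g : P) (v : V), v ∈ ker T → ω g v ∈ ker T := by
    intro g v hv
    rw [mem_ker] at hv ⊢
    have := LinearMap.congr_fun (hint g).symm v
    simp only [coe_comp, Function.comp_apply] at this
    rw [this, hv, map_zero]
  have hker : ker T = ⊥ := by
    rcases hirr.2 (ker T) hkerinv with h | h
    · exact h
    · exact absurd (ker_eq_top.1 h) hf
  have hrinv : ∀ (g : P) (w : V'), w ∈ range T → ω' g w ∈ range T := by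
    rintro g _ ⟨v, rfl⟩
    have := LinearMap.congr_fun (hint g) v
    simp only [coe_comp, Function.comp_apply] at this
    exact ⟨ω g v, this.symm⟩
  have hrange : range T = ⊤ := by
    rcases hirr'.2 (range T) hrinv with h | h
    · exact absurd (range_eq_bot.1 h) hf
    · exact h
  refine ⟨LinearEquiv.ofBijective T ⟨ker_eq_bot.1 hker, range_eq_top.1 hrange⟩, fun g v => ?_⟩
  have := LinearMap.congr_fun (hint g) v
  simp only [coe_comp, Function.comp_apply] at this
  exact this.symm

lemma dim_sq_eq (hp : p.Prime) (hP : IsHeisenberg p P) (hψ : ψ ≠ 1)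
    (ω : Representation ℂ P V) [FiniteDimensional ℂ V]
    (hirr : IsIrrep ω) (hω : HasCentralCharacter ω ψ) :
    p * (Module.finrank ℂ V) ^ 2 = Nat.card P := by
  haveI : Fintype P := Fintype.ofFinite P
  haveI : Nontrivial V := hirr.1
  have h1 := trace_avg hp hP hψ ω ω hω hω
  have h2 := trace_avg_self ω hirr
  rw [h2] at h1
  have hcard : (Nat.card P : ℂ) ≠ 0 := Nat.cast_ne_zero.2 Nat.card_pos.ne'
  rw [Nat.card_eq_fintype_card]
  have : ((p * (Module.finrank ℂ V) ^ 2 : ℕ) : ℂ) = ((Fintype.card P : ℕ) : ℂ) := by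
    push_cast
    field_simp at h1
    rw [Nat.card_eq_fintype_card] at h1
    linear_combination - h1
  exact_mod_cast this

end Main

/-! ### Construction of the model -/

section Model

variable {P : Type*} [Group P]
variable {U : Type*} [AddCommGroup U] [Module ℂ U]
variable {W : Type*} [AddCommGroup W] [Module ℂ W]
variable {ψ : ↥(Subgroup.center P) →* ℂˣ}

/-- The restriction of a representation to an invariant submodule. -/
noncomputable def Representation.restrictSub (ρ : Representation ℂ P U)
    (N : Submodule ℂ U) (hN : ∀ (g : P) (v : U), v ∈ N → ρ g v ∈ N) :
    Representation ℂ P ↥N where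
  toFun g := (ρ g).restrict (hN g)
  map_one' := by
    refine LinearMap.ext fun v => Subtype.ext ?_
    simp [LinearMap.restrict_apply]
  map_mul' g h := by
    refine LinearMap.ext fun v => Subtype.ext ?_
    simp [LinearMap.restrict_apply, map_mul]

lemma Representation.restrictSub_coe (ρ : Representation ℂ P U)
    (N : Submodule ℂ U) (hN : ∀ (g : P) (v : U), v ∈ N → ρ g v ∈ N) (g : P) (v : ↥N) :
    ((ρ.restrictSub N hN g v : ↥N) : U) = ρ g (v : U) := rfl

/-- Transport of a representation along a linear equivalence. -/
noncomputable def Representation.congr (ρ : Representation ℂ P U) (e : U ≃ₗ[ℂ] W) :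
    Representation ℂ P W where
  toFun g := e.conj (ρ g)
  map_one' := by
    show e.conj (ρ 1) = 1
    rw [map_one, Module.End.one_eq_id, LinearEquiv.conj_id, Module.End.one_eq_id]
  map_mul' g h := by
    show e.conj (ρ (g * h)) = e.conj (ρ g) * e.conj (ρ h)
    rw [map_mul, Module.End.mul_eq_comp, LinearEquiv.conj_comp, Module.End.mul_eq_comp]

lemma Representation.congr_apply (ρ : Representation ℂ P U) (e : U ≃ₗ[ℂ] W) (g : P) (w : W) :
    (ρ.congr e) g w = e (ρ g (e.symm w)) := by
  simp [Representation.congr, LinearEquiv.conj_apply]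

/-- From any nontrivial finite-dimensional representation with central character `ψ`,
extract an irreducible one on a model space `Fin n → ℂ`. -/
lemma exists_irrep_of_nontrivial [FiniteDimensional ℂ U] [Nontrivial U]
    (ρ : Representation ℂ P U) (hρ : HasCentralCharacter ρ ψ) :
    ∃ (n : ℕ) (ω : Representation ℂ P (Fin n → ℂ)),
      IsIrrep ω ∧ HasCentralCharacter ω ψ := by
  classical
  set S : Set (Submodule ℂ U) :=
    {N | N ≠ ⊥ ∧ ∀ (g : P) (v : U), v ∈ N → ρ g v ∈ N} with hS
  have htopS : (⊤ : Submodule ℂ U) ∈ S := by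
    have hnt : Nontrivial ↥(⊤ : Submodule ℂ U) :=
      (Submodule.topEquiv (R := ℂ) (M := U)).toEquiv.nontrivial
    exact ⟨Submodule.nontrivial_iff_ne_bot.mp hnt, fun g v _ => Submodule.mem_top⟩
  have hne : {n | ∃ N ∈ S, Module.finrank ℂ ↥N = n}.Nonempty :=
    ⟨_, ⟨⊤, htopS, rfl⟩⟩
  obtain ⟨N, hNS, hNrank⟩ := Nat.sInf_mem hne
  obtain ⟨hNbot, hNinv⟩ := hNS
  haveI : Nontrivial ↥N := Submodule.nontrivial_iff_ne_bot.2 hNbot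
  set ρN := ρ.restrictSub N hNinv with hρN
  have hirrN : IsIrrep ρN := by
    refine ⟨inferInstance, fun N' hN' => ?_⟩
    by_cases hbot : N' = ⊥
    · exact Or.inl hbot
    right
    set N'' : Submodule ℂ U := N'.map N.subtype with hN''
    have hN''inv : ∀ (g : P) (v : U), v ∈ N'' → ρ g v ∈ N'' := by
      rintro g _ ⟨u', hu', rfl⟩
      exact ⟨ρN g u', hN' g u' hu', (ρ.restrictSub_coe N hNinv g u').symm⟩
    have hN''bot : N'' ≠ ⊥ := by
      intro h
      apply hbot
      apply Submodule.map_injective_of_injective N.injective_subtype (a₁ := N') (a₂ := ⊥)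
      rw [Submodule.map_bot, ← hN'', h]
    have hle : N'' ≤ N := Submodule.map_subtype_le N N'
    have hrank1 : Module.finrank ℂ ↥N ≤ Module.finrank ℂ ↥N'' := by
      rw [hNrank]
      exact Nat.sInf_le ⟨N'', ⟨hN''bot, hN''inv⟩, rfl⟩
    have heq : N'' = N := Submodule.eq_of_le_of_finrank_le hle hrank1
    have : N'.map N.subtype = (⊤ : Submodule ℂ ↥N).map N.subtype := by
      rw [Submodule.map_subtype_top, ← hN'']
      exact heq
    exact Submodule.map_injective_of_injective N.injective_subtype this
  have hccN : HasCentralCharacter ρN ψ := by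
    intro z
    refine LinearMap.ext fun v => Subtype.ext ?_
    rw [Representation.restrictSub_coe]
    rw [hρ z]
    simp
  set n := Module.finrank ℂ ↥N with hn
  set e : ↥N ≃ₗ[ℂ] (Fin n → ℂ) := (Module.finBasis ℂ ↥N).equivFun with he
  refine ⟨n, ρN.congr e, ⟨?_, ?_⟩, ?_⟩
  · exact (e.symm.toEquiv).nontrivial
  · intro W' hW'
    set W'' : Submodule ℂ ↥N := W'.map e.symm.toLinearMap with hW''
    have hmapback : W''.map e.toLinearMap = W' := by
      rw [hW'', ← Submodule.map_comp]
      have hcomp : (e.toLinearMap) ∘ₗ (e.symm.toLinearMap) = LinearMap.id := by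
        refine LinearMap.ext fun w => ?_
        simp
      rw [hcomp, Submodule.map_id]
    have hW''inv : ∀ (g : P) (v : ↥N), v ∈ W'' → ρN g v ∈ W'' := by
      rintro g _ ⟨w', hw', rfl⟩
      refine ⟨(ρN.congr e) g w', hW' g w' hw', ?_⟩
      rw [Representation.congr_apply]
      simp
    rcases hirrN.2 W'' hW''inv with h | h
    · left
      rw [← hmapback, h, Submodule.map_bot]
    · right
      rw [← hmapback, h, Submodule.map_top, LinearEquiv.range]
  · intro z
    refine LinearMap.ext fun w => ?_
    rw [Representation.congr_apply, hccN z]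
    simp

end Model

/-! ### The induced-from-center model space -/

section Induced

variable {P : Type*} [Group P] (ψ : ↥(Subgroup.center P) →* ℂˣ)

/-- The right regular representation on `P → ℂ`. -/
noncomputable def rreg : Representation ℂ P (P → ℂ) where
  toFun g := LinearMap.funLeft ℂ ℂ (fun x => x * g)
  map_one' := by
    refine LinearMap.ext fun f => funext fun x => ?_
    simp [LinearMap.funLeft]
  map_mul' g h := by
    refine LinearMap.ext fun f => funext fun x => ?_
    simp [LinearMap.funLeft, mul_assoc]

lemma rreg_apply (g : P) (f : P → ℂ) (x : P) : rreg g f x = f (x * g) := rfl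

/-- The space of functions `f` with `f (z * x) = ψ z * f x`. -/
noncomputable def modelSub : Submodule ℂ (P → ℂ) where
  carrier := {f | ∀ (z : ↥(Subgroup.center P)) (x : P), f ((z : P) * x) = ((ψ z : ℂˣ) : ℂ) * f x}
  add_mem' := by
    intro f g hf hg z x
    simp only [Pi.add_apply, hf z x, hg z x]
    ring
  zero_mem' := by intro z x; simp
  smul_mem' := by
    intro c f hf z x
    simp only [Pi.smul_apply, hf z x, smul_eq_mul]
    ring

lemma modelSub_invariant : ∀ (g : P) (f : P → ℂ), f ∈ modelSub ψ → rreg g f ∈ modelSub ψ := by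
  intro g f hf z x
  rw [rreg_apply, rreg_apply, mul_assoc]
  exact hf z (x * g)

lemma modelSub_nontrivial : Nontrivial ↥(modelSub ψ) := by
  classical
  set f₀ : P → ℂ := fun x => if h : x ∈ Subgroup.center P then ((ψ ⟨x, h⟩ : ℂˣ) : ℂ) else 0
    with hf₀
  have hmem : f₀ ∈ modelSub ψ := by
    intro z x
    by_cases hx : x ∈ Subgroup.center P
    · have hzx : (z : P) * x ∈ Subgroup.center P := mul_mem z.2 hx
      have : (⟨(z : P) * x, hzx⟩ : ↥(Subgroup.center P)) = z * ⟨x, hx⟩ := rfl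
      simp only [hf₀, dif_pos hx, dif_pos hzx, this, map_mul, Units.val_mul]
    · have hzx : (z : P) * x ∉ Subgroup.center P := by
        intro h
        exact hx (by simpa using mul_mem (inv_mem z.2) h)
      simp [hf₀, dif_neg hx, dif_neg hzx]
  refine ⟨⟨⟨f₀, hmem⟩, 0, ?_⟩⟩
  intro h
  have h1 : f₀ 1 = 0 := by
    have := congrArg Subtype.val h
    simp only [ZeroMemClass.coe_zero] at this
    rw [this]
    rfl
  rw [hf₀] at h1
  simp only [dif_pos (Subgroup.one_mem _)] at h1
  have : (⟨(1 : P), Subgroup.one_mem _⟩ : ↥(Subgroup.center P)) = 1 := rfl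
  rw [this, map_one] at h1
  simp at h1

lemma modelRep_central : HasCentralCharacter
    ((rreg (P := P)).restrictSub (modelSub ψ) (modelSub_invariant ψ)) ψ := by
  intro z
  refine LinearMap.ext fun v => Subtype.ext ?_
  rw [Representation.restrictSub_coe]
  refine funext fun x => ?_
  have hc : x * (z : P) = (z : P) * x := Subgroup.mem_center_iff.1 z.2 x
  calc (rreg (z : P) (v : P → ℂ)) x = (v : P → ℂ) (x * (z : P)) := rfl
    _ = (v : P → ℂ) ((z : P) * x) := by rw [hc]
    _ = ((ψ z : ℂˣ) : ℂ) * (v : P → ℂ) x := v.2 z x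
    _ = ((((ψ z : ℂˣ) : ℂ) • LinearMap.id : ↥(modelSub ψ) →ₗ[ℂ] ↥(modelSub ψ)) v : P → ℂ) x := rfl

end Induced

/-- Stone–von Neumann: for a Heisenberg `𝔽_p`-group `P` and a nontrivial
character `ψ` of its center, there is an irreducible complex representation of
`P` on which the center acts by `ψ`; any two such are isomorphic; and its
dimension squares to `|P/Z(P)|`. -/
theorem stmt_5 (p : ℕ) (hp : p.Prime) (P : Type*) [Group P] [Finite P]
    (hP : IsHeisenberg p P)
    (ψ : ↥(Subgroup.center P) →* ℂˣ) (hψ : ψ ≠ 1) :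
    ∃ (V : Type) (_ : AddCommGroup V) (_ : Module ℂ V)
      (ω : Representation ℂ P V),
      FiniteDimensional ℂ V ∧ IsIrrep ω ∧ HasCentralCharacter ω ψ ∧
      (∀ (V' : Type u) (_ : AddCommGroup V') (_ : Module ℂ V')
          (ω' : Representation ℂ P V'),
          IsIrrep ω' → HasCentralCharacter ω' ψ →
          ∃ e : V ≃ₗ[ℂ] V', ∀ (g : P) (v : V), e (ω g v) = ω' g (e v)) ∧
      Module.finrank ℂ V ^ 2 = Nat.card (P ⧸ Subgroup.center P) := by
  haveI : Fintype P := Fintype.ofFinite P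
  haveI : Nontrivial ↥(modelSub ψ) := modelSub_nontrivial ψ
  obtain ⟨n, ω, hirr, hcc⟩ := exists_irrep_of_nontrivial
    ((rreg (P := P)).restrictSub (modelSub ψ) (modelSub_invariant ψ)) (modelRep_central ψ)
  refine ⟨Fin n → ℂ, inferInstance, inferInstance, ω, inferInstance, hirr, hcc, ?_, ?_⟩
  · intro V' _ _ ω' hirr' hcc'
    exact exists_equiv hp hP hψ ω hirr hcc ω' hirr' hcc'
  · have hdim := dim_sq_eq hp hP hψ ω hirr hcc
    have hcard : Nat.card P = Nat.card (P ⧸ Subgroup.center P) * Nat.card (Subgroup.center P) :=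
      Subgroup.card_eq_card_quotient_mul_card_subgroup _
    rw [hcard, hP.card_center] at hdim
    exact Nat.eq_of_mul_eq_mul_left hp.pos (by rw [hdim, mul_comm])
end

section
/- Let p be an odd prime, let P be a Heisenberg 𝔽_p-group, and let ψ : Z(P) → ℂˣ be a nontrivial character. Then the Heisenberg representation ω_ψ is not isomorphic to its dual (contragredient) representation; indeed, the dual of ω_ψ is isomorphic to ω_{ψ⁻¹}, and ψ⁻¹ ≠ ψ. -/
universe u

open scoped commutatorElement

section Aux

open Module

-- A. finite dimensionality from irreducibility
lemma aux_findim {G : Type*} [Group G] [Finite G] {V : Type*} [AddCommGroup V]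
    [Module ℂ V] (ρ : Representation ℂ G V) (h : IsIrrep ρ) :
    FiniteDimensional ℂ V := by
  obtain ⟨hnt, hsub⟩ := h
  obtain ⟨v, hv⟩ := exists_ne (0 : V)
  haveI := Fintype.ofFinite G
  set W : Submodule ℂ V := Submodule.span ℂ (Set.range fun g : G => ρ g v) with hW
  have hinv : ∀ (g : G) (w : V), w ∈ W → ρ g w ∈ W := by
    intro g w hw
    induction hw using Submodule.span_induction with
    | mem x hx =>
      obtain ⟨g', rfl⟩ := hx
      exact Submodule.subset_span ⟨g * g', by simp [map_mul]⟩
    | zero => simp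
    | add x y _ _ hx hy => rw [map_add]; exact W.add_mem hx hy
    | smul c x _ hx => rw [map_smul]; exact W.smul_mem c hx
  have hWne : W ≠ ⊥ := by
    intro hbot
    apply hv
    have : ρ 1 v ∈ W := Submodule.subset_span ⟨1, rfl⟩
    rw [hbot, Submodule.mem_bot] at this
    simpa using this
  have hWtop : W = ⊤ := (hsub W hinv).resolve_left hWne
  have : FiniteDimensional ℂ W := by
    apply FiniteDimensional.span_of_finite
    exact Set.finite_range _
  rw [hWtop] at this
  exact this.of_injective (Submodule.topEquiv : (⊤ : Submodule ℂ V) ≃ₗ[ℂ] V).symm.toLinearMap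
    (LinearEquiv.injective _)

end Aux

-- C. dual has inverse central character
lemma aux_dual_cc {P : Type*} [Group P] {V : Type*} [AddCommGroup V] [Module ℂ V]
    (ω : Representation ℂ P V) (ψ : ↥(Subgroup.center P) →* ℂˣ)
    (h : HasCentralCharacter ω ψ) : HasCentralCharacter ω.dual ψ⁻¹ := by
  intro z
  ext f v
  have hz : ω ((z⁻¹ : ↥(Subgroup.center P)) : P) = (((ψ z⁻¹ : ℂˣ) : ℂ) • LinearMap.id : V →ₗ[ℂ] V) := h z⁻¹
  simp only [Representation.dual_apply]
  have : ((z : P))⁻¹ = ((z⁻¹ : ↥(Subgroup.center P)) : P) := rfl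
  rw [Module.Dual.transpose_apply, this, hz]
  simp [map_inv]

-- B. dual of irrep is irrep
lemma aux_dual_irrep {G : Type*} [Group G] {V : Type*} [AddCommGroup V] [Module ℂ V]
    [FiniteDimensional ℂ V] (ρ : Representation ℂ G V) (h : IsIrrep ρ) :
    IsIrrep ρ.dual := by
  obtain ⟨hnt, hsub⟩ := h
  constructor
  · have h1 : 0 < Module.finrank ℂ V := Module.finrank_pos
    have : 0 < Module.finrank ℂ (Module.Dual ℂ V) := by
      rw [Subspace.dual_finrank_eq]; exact h1
    exact Module.nontrivial_of_finrank_pos this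
  · intro W hWinv
    have hco : ∀ (g : G) (v : V), v ∈ W.dualCoannihilator → ρ g v ∈ W.dualCoannihilator := by
      intro g v hv
      rw [Submodule.mem_dualCoannihilator] at hv ⊢
      intro f hf
      have : ρ.dual g⁻¹ f ∈ W := hWinv g⁻¹ f hf
      have := hv _ this
      simpa [Representation.dual_apply, Module.Dual.transpose_apply] using this
    have hrk := Subspace.finrank_add_finrank_dualCoannihilator_eq (W := W)
    rcases hsub _ hco with hbot | htop
    · right
      apply Submodule.eq_top_of_finrank_eq
      rw [hbot] at hrk
      simp only [finrank_bot, add_zero] at hrk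
      rw [hrk, Subspace.dual_finrank_eq]
    · left
      rw [htop] at hrk
      rw [← Submodule.finrank_eq_zero (S := W)]
      have h2 : Module.finrank ℂ (⊤ : Submodule ℂ V) = Module.finrank ℂ V := finrank_top ℂ V
      omega

-- D. injectivity of nontrivial character on prime-order group
lemma aux_ker {Z : Type*} [Group Z] {p : ℕ} (hp : p.Prime)
    (hcard : Nat.card Z = p) (ψ : Z →* ℂˣ) (hψ : ψ ≠ 1) :
    ∀ z : Z, z ≠ 1 → ψ z ≠ 1 := by
  intro z hz hψz
  haveI : Finite Z := Nat.finite_of_card_ne_zero (by rw [hcard]; exact hp.pos.ne')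
  apply hψ
  have hord : orderOf z = p := by
    have h1 : orderOf z ∣ p := hcard ▸ orderOf_dvd_natCard z
    rcases (Nat.Prime.eq_one_or_self_of_dvd hp _ h1) with h | h
    · exact absurd (orderOf_eq_one_iff.mp h) hz
    · exact h
  have htop : Subgroup.zpowers z = ⊤ := by
    apply Subgroup.eq_top_of_card_eq
    rw [Nat.card_zpowers, hord, hcard]
  ext w
  have hw : w ∈ Subgroup.zpowers z := htop ▸ Subgroup.mem_top w
  obtain ⟨k, rfl⟩ := hw
  simp only [map_zpow, hψz, one_zpow, MonoidHom.one_apply]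

-- E. ψ⁻¹ ≠ ψ for p odd
lemma aux_psi_ne {Z : Type*} [Group Z] {p : ℕ} (hp : p.Prime) (hodd : p ≠ 2)
    (hcard : Nat.card Z = p) (ψ : Z →* ℂˣ) (hψ : ψ ≠ 1) : ψ⁻¹ ≠ ψ := by
  intro heq
  haveI : Finite Z := Nat.finite_of_card_ne_zero (by rw [hcard]; exact hp.pos.ne')
  apply hψ
  ext z
  have h2 : ψ z ^ 2 = 1 := by
    have hinv : (ψ z)⁻¹ = ψ z := DFunLike.congr_fun heq z
    rw [sq]
    nth_rewrite 1 [← hinv]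
    exact inv_mul_cancel _
  have hpz : ψ z ^ p = 1 := by
    rw [← map_pow]
    have : z ^ p = 1 := by rw [← hcard]; exact pow_card_eq_one'
    rw [this, map_one]
  have hd2 : orderOf (ψ z) ∣ 2 := orderOf_dvd_of_pow_eq_one h2
  have hdp : orderOf (ψ z) ∣ p := orderOf_dvd_of_pow_eq_one hpz
  have hcop : Nat.Coprime 2 p := (Nat.coprime_primes Nat.prime_two hp).mpr (Ne.symm hodd)
  have h1 : orderOf (ψ z) ∣ 1 := hcop ▸ Nat.dvd_gcd hd2 hdp
  have := orderOf_eq_one_iff.mp (Nat.dvd_one.mp h1)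
  simp [this]
open CategoryTheory

variable {G : Type} [Group G]

/-- Restriction of a representation (in `FDRep`) to an invariant submodule. -/
noncomputable def resRep (Y : FDRep ℂ G) (K : Submodule ℂ Y) (hK : ∀ g, ∀ y ∈ K, Y.ρ g y ∈ K) :
    Representation ℂ G K where
  toFun g := (Y.ρ g).restrict (fun y hy => hK g y hy)
  map_one' := by ext y; simp [LinearMap.restrict_apply]
  map_mul' g h := by ext y; simp [LinearMap.restrict_apply]

lemma simple_of_irrep {V : Type} [AddCommGroup V] [Module ℂ V] [FiniteDimensional ℂ V]
    (ρ : Representation ℂ G V) (hirr : IsIrrep ρ) : Simple (FDRep.of ρ) := by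
  constructor
  intro Y f hmono
  constructor
  · -- IsIso → f ≠ 0
    intro hiso hf0
    haveI := hirr.1
    obtain ⟨v, hv⟩ := exists_ne (0 : V)
    apply hv
    subst hf0
    have h1 : (𝟙 (FDRep.of ρ)) = inv (0 : Y ⟶ FDRep.of ρ) ≫ (0 : Y ⟶ FDRep.of ρ) :=
      (IsIso.inv_hom_id _).symm
    rw [Limits.comp_zero] at h1
    have h2 := congrArg Action.Hom.hom h1
    rw [Action.zero_hom, Action.id_hom] at h2
    calc v = (𝟙 (FDRep.of ρ).V : (FDRep.of ρ).V ⟶ (FDRep.of ρ).V) v := rfl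
    _ = (0 : (FDRep.of ρ).V ⟶ (FDRep.of ρ).V) v := by rw [h2]
    _ = 0 := rfl
  · -- f ≠ 0 → IsIso
    intro hf
    have hcomm : ∀ (g : G) (y : Y), f.hom.hom.hom (Y.ρ g y) = ρ g (f.hom.hom.hom y) := by
      intro g y
      have := f.comm g
      exact LinearMap.congr_fun (congrArg (fun h => h.hom.hom) this) y
    have hhomne : (f.hom.hom.hom : Y →ₗ[ℂ] V) ≠ 0 := by
      intro h0
      apply hf
      ext y
      show (f.hom.hom.hom : Y →ₗ[ℂ] V) y = (0 : Y ⟶ FDRep.of ρ).hom y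
      rw [h0, Action.zero_hom]
      rfl
    -- surjectivity
    have hsurj : Function.Surjective (f.hom.hom.hom : Y →ₗ[ℂ] V) := by
      have hr : ∀ g, ∀ v ∈ LinearMap.range (f.hom.hom.hom : Y →ₗ[ℂ] V),
          ρ g v ∈ LinearMap.range (f.hom.hom.hom : Y →ₗ[ℂ] V) := by
        rintro g v ⟨y, rfl⟩
        exact ⟨Y.ρ g y, hcomm g y⟩
      rcases hirr.2 _ hr with hbot | htop
      · exfalso; apply hhomne
        ext y
        have : f.hom.hom.hom y ∈ LinearMap.range (f.hom.hom.hom : Y →ₗ[ℂ] V) := ⟨y, rfl⟩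
        rw [hbot] at this
        simpa using this
      · rw [← LinearMap.range_eq_top]; exact htop
    -- injectivity via Mono
    have hinj : Function.Injective (f.hom.hom.hom : Y →ₗ[ℂ] V) := by
      rw [← LinearMap.ker_eq_bot]
      set K := LinearMap.ker (f.hom.hom.hom : Y →ₗ[ℂ] V) with hKdef
      have hKinv : ∀ g, ∀ y ∈ K, Y.ρ g y ∈ K := by
        intro g y hy
        rw [LinearMap.mem_ker] at hy ⊢
        calc f.hom.hom.hom (Y.ρ g y) = ρ g (f.hom.hom.hom y) := hcomm g y
          _ = 0 := by rw [hy, map_zero]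
      haveI : FiniteDimensional ℂ K := inferInstance
      let Z : FDRep ℂ G := FDRep.of (resRep Y K hKinv)
      let i : Z ⟶ Y := ⟨ConcreteCategory.ofHom (K.subtype : K →ₗ[ℂ] Y), by
        intro g; ext y; rfl⟩
      have hif : i ≫ f = (0 : Z ⟶ Y) ≫ f := by
        rw [Limits.zero_comp]
        ext y
        rw [Action.comp_hom, Action.zero_hom]
        have hy : f.hom.hom.hom (K.subtype y) = 0 := y.2
        exact hy
      have hi0 : i = (0 : Z ⟶ Y) := Mono.right_cancellation _ _ hif
      ext y
      constructor
      · intro hy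
        have : (⟨y, hy⟩ : K) = (0 : K) := by
          have := congrArg Action.Hom.hom hi0
          have h2 := congrArg (fun (h : Z.V ⟶ Y.V) => h ⟨y, hy⟩) this
          simp only [Action.zero_hom] at h2
          apply Subtype.ext
          exact h2
        simpa using congrArg Subtype.val this
      · intro hy
        simp only [Submodule.mem_bot] at hy
        rw [hy]; exact K.zero_mem
    -- build inverse
    let e : Y ≃ₗ[ℂ] V := LinearEquiv.ofBijective (f.hom.hom.hom : Y →ₗ[ℂ] V) ⟨hinj, hsurj⟩
    refine ⟨⟨⟨ConcreteCategory.ofHom (e.symm : V →ₗ[ℂ] Y), ?_⟩, ?_, ?_⟩⟩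
    · intro g
      ext v
      obtain ⟨y, rfl⟩ := hsurj v
      show e.symm (ρ g ((f.hom.hom.hom : Y →ₗ[ℂ] V) y)) = Y.ρ g (e.symm ((f.hom.hom.hom : Y →ₗ[ℂ] V) y))
      have h1 : ∀ y : Y, e.symm ((f.hom.hom.hom : Y →ₗ[ℂ] V) y) = y := fun y =>
        e.symm_apply_apply y
      rw [← hcomm g y, h1, h1]
    · ext y
      show e.symm ((f.hom.hom.hom : Y →ₗ[ℂ] V) y) = y
      exact e.symm_apply_apply y
    · ext v
      show (f.hom.hom.hom : Y →ₗ[ℂ] V) (e.symm v) = v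
      exact e.apply_symm_apply v

variable {G : Type} [Group G] {V : Type} [AddCommGroup V] [Module ℂ V]
  [FiniteDimensional ℂ V] (ρ : Representation ℂ G V)

open Module

lemma char_of (g : G) : (FDRep.of ρ).character g = LinearMap.trace ℂ V (ρ g) := rfl

lemma char_on (φ : ↥(Subgroup.center G) →* ℂˣ) (hc : HasCentralCharacter ρ φ)
    (g : G) (hg : g ∈ Subgroup.center G) :
    (FDRep.of ρ).character g = (finrank ℂ V : ℂ) * ((φ ⟨g, hg⟩ : ℂˣ) : ℂ) := by
  rw [char_of, hc ⟨g, hg⟩]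
  rw [map_smul, LinearMap.trace_id, smul_eq_mul]
  ring

lemma char_off (hcomm : ∀ x y : G, ⁅x, y⁆ ∈ Subgroup.center G)
    (φ : ↥(Subgroup.center G) →* ℂˣ) (hc : HasCentralCharacter ρ φ)
    (hker : ∀ z : ↥(Subgroup.center G), z ≠ 1 → φ z ≠ 1)
    (g : G) (hg : g ∉ Subgroup.center G) :
    (FDRep.of ρ).character g = 0 := by
  have hy : ∃ y : G, y * g ≠ g * y := by
    by_contra h
    push_neg at h
    exact hg (Subgroup.mem_center_iff.mpr h)
  obtain ⟨y, hy⟩ := hy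
  set c := ⁅y, g⁆ with hcdef
  have hcmem : c ∈ Subgroup.center G := hcomm y g
  have hc1 : c ≠ 1 := by
    rw [hcdef, Ne, commutatorElement_eq_one_iff_commute]
    exact fun h => hy h.eq
  have hφc : ((φ ⟨c, hcmem⟩ : ℂˣ) : ℂ) ≠ 1 := by
    intro h
    exact hker ⟨c, hcmem⟩ (fun h' => hc1 (congrArg Subtype.val h')) (Units.ext h)
  have key : (FDRep.of ρ).character g = ((φ ⟨c, hcmem⟩ : ℂˣ) : ℂ) * (FDRep.of ρ).character g := by
    conv_lhs => rw [← FDRep.char_conj (FDRep.of ρ) g y]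
    have hcg : y * g * y⁻¹ = c * g := by
      rw [hcdef]; group
    rw [hcg, char_of, char_of]
    rw [map_mul]
    have := hc ⟨c, hcmem⟩
    rw [this]
    rw [Module.End.mul_eq_comp, LinearMap.smul_comp, LinearMap.id_comp, map_smul, smul_eq_mul]
  have h0 : (1 - ((φ ⟨c, hcmem⟩ : ℂˣ) : ℂ)) * (FDRep.of ρ).character g = 0 := by
    linear_combination key
  rcases mul_eq_zero.mp h0 with h | h
  · exact absurd (by linear_combination -h) hφc
  · exact h

lemma char_sum {W : Type} [AddCommGroup W] [Module ℂ W] [FiniteDimensional ℂ W]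
    [Fintype G] (hcomm : ∀ x y : G, ⁅x, y⁆ ∈ Subgroup.center G)
    (φ : ↥(Subgroup.center G) →* ℂˣ)
    (hker : ∀ z : ↥(Subgroup.center G), z ≠ 1 → φ z ≠ 1)
    (ρW : Representation ℂ G W)
    (hcV : HasCentralCharacter ρ φ) (hcW : HasCentralCharacter ρW φ) :
    ∑ g : G, (FDRep.of ρ).character g * (FDRep.of ρW).character g⁻¹
      = (finrank ℂ V : ℂ) * (finrank ℂ W : ℂ) * (Nat.card ↥(Subgroup.center G) : ℂ) := by
  classical
  have hterm : ∀ g : G, (FDRep.of ρ).character g * (FDRep.of ρW).character g⁻¹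
      = if g ∈ Subgroup.center G then ((finrank ℂ V : ℂ) * (finrank ℂ W : ℂ)) else 0 := by
    intro g
    by_cases hg : g ∈ Subgroup.center G
    · rw [if_pos hg, char_on ρ φ hcV g hg]
      have hginv : g⁻¹ ∈ Subgroup.center G := inv_mem hg
      rw [char_on ρW φ hcW g⁻¹ hginv]
      have h1 : (⟨g⁻¹, hginv⟩ : ↥(Subgroup.center G)) = (⟨g, hg⟩ : ↥(Subgroup.center G))⁻¹ := rfl
      rw [h1, map_inv]
      have hu : ((φ ⟨g, hg⟩ : ℂˣ) : ℂ) * (((φ ⟨g, hg⟩)⁻¹ : ℂˣ) : ℂ) = 1 := by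
        rw [← Units.val_mul, mul_inv_cancel, Units.val_one]
      linear_combination ((finrank ℂ V : ℂ) * (finrank ℂ W : ℂ)) * hu
    · rw [if_neg hg, char_off ρ hcomm φ hcV hker g hg, zero_mul]
  rw [Finset.sum_congr rfl (fun g _ => hterm g)]
  rw [Finset.sum_ite, Finset.sum_const, Finset.sum_const_zero, add_zero, nsmul_eq_mul]
  have h2 : (Finset.filter (fun g => g ∈ Subgroup.center G) Finset.univ).card
      = Nat.card ↥(Subgroup.center G) := by
    rw [Nat.card_eq_fintype_card]
    exact (Fintype.card_subtype _).symm
  rw [h2]; ring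

lemma core_iso {W : Type} [AddCommGroup W] [Module ℂ W] [FiniteDimensional ℂ W]
    [Fintype G] (hcomm : ∀ x y : G, ⁅x, y⁆ ∈ Subgroup.center G)
    (φ : ↥(Subgroup.center G) →* ℂˣ)
    (hker : ∀ z : ↥(Subgroup.center G), z ≠ 1 → φ z ≠ 1)
    (ρW : Representation ℂ G W)
    (hirrV : IsIrrep ρ) (hirrW : IsIrrep ρW)
    (hcV : HasCentralCharacter ρ φ) (hcW : HasCentralCharacter ρW φ) :
    Nonempty (FDRep.of ρ ≅ FDRep.of ρW) := by
  classical
  haveI : Invertible (Fintype.card G : ℂ) :=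
    invertibleOfNonzero (Nat.cast_ne_zero.mpr Fintype.card_ne_zero)
  letI : Invertible ((Nat.card G) : ℂ) :=
    invertibleOfNonzero (Nat.cast_ne_zero.mpr Nat.card_pos.ne')
  haveI := simple_of_irrep ρ hirrV
  haveI := simple_of_irrep ρW hirrW
  have hselfV : ⅟(Fintype.card G : ℂ) * ((finrank ℂ V : ℂ) * (finrank ℂ V : ℂ) * (Nat.card ↥(Subgroup.center G) : ℂ)) = 1 := by
    have h0 := FDRep.char_orthonormal (k := ℂ) (G := G) (FDRep.of ρ) (FDRep.of ρ)
    have h1 : ⅟(Fintype.card G : ℂ) • ∑ g : G,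
        (FDRep.of ρ).character g * (FDRep.of ρ).character g⁻¹
        = (if Nonempty (FDRep.of ρ ≅ FDRep.of ρ) then (1 : ℂ) else 0) := by
      rw [smul_eq_mul, invOf_eq_inv, Fintype.card_eq_nat_card]; exact h0
    rw [char_sum ρ hcomm φ hker ρ hcV hcV, if_pos ⟨Iso.refl _⟩, smul_eq_mul] at h1
    exact_mod_cast h1
  have hselfW : ⅟(Fintype.card G : ℂ) * ((finrank ℂ W : ℂ) * (finrank ℂ W : ℂ) * (Nat.card ↥(Subgroup.center G) : ℂ)) = 1 := by
    have h0 := FDRep.char_orthonormal (k := ℂ) (G := G) (FDRep.of ρW) (FDRep.of ρW)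
    have h1 : ⅟(Fintype.card G : ℂ) • ∑ g : G,
        (FDRep.of ρW).character g * (FDRep.of ρW).character g⁻¹
        = (if Nonempty (FDRep.of ρW ≅ FDRep.of ρW) then (1 : ℂ) else 0) := by
      rw [smul_eq_mul, invOf_eq_inv, Fintype.card_eq_nat_card]; exact h0
    rw [char_sum ρW hcomm φ hker ρW hcW hcW, if_pos ⟨Iso.refl _⟩, smul_eq_mul] at h1
    exact_mod_cast h1
  have hcross0 := FDRep.char_orthonormal (k := ℂ) (G := G) (FDRep.of ρ) (FDRep.of ρW)
  have hcross : ⅟(Fintype.card G : ℂ) • ∑ g : G,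
      (FDRep.of ρ).character g * (FDRep.of ρW).character g⁻¹
      = (if Nonempty (FDRep.of ρ ≅ FDRep.of ρW) then (1 : ℂ) else 0) := by
    rw [smul_eq_mul, invOf_eq_inv, Fintype.card_eq_nat_card]; exact hcross0
  rw [char_sum ρ hcomm φ hker ρW hcV hcW, smul_eq_mul] at hcross
  have hne : ⅟(Fintype.card G : ℂ) * ((finrank ℂ V : ℂ) * (finrank ℂ W : ℂ) * (Nat.card ↥(Subgroup.center G) : ℂ)) ≠ 0 := by
    intro h0
    have hsq : (⅟(Fintype.card G : ℂ) * ((finrank ℂ V : ℂ) * (finrank ℂ W : ℂ) * (Nat.card ↥(Subgroup.center G) : ℂ))) ^ 2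
        = (⅟(Fintype.card G : ℂ) * ((finrank ℂ V : ℂ) * (finrank ℂ V : ℂ) * (Nat.card ↥(Subgroup.center G) : ℂ))) * (⅟(Fintype.card G : ℂ) * ((finrank ℂ W : ℂ) * (finrank ℂ W : ℂ) * (Nat.card ↥(Subgroup.center G) : ℂ))) := by
      ring
    rw [h0, hselfV, hselfW] at hsq
    simp at hsq
  rw [hcross] at hne
  by_contra hiso
  rw [if_neg hiso] at hne
  simp at hne

lemma core_equiv {W : Type} [AddCommGroup W] [Module ℂ W] [FiniteDimensional ℂ W]
    [Fintype G] (hcomm : ∀ x y : G, ⁅x, y⁆ ∈ Subgroup.center G)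
    (φ : ↥(Subgroup.center G) →* ℂˣ)
    (hker : ∀ z : ↥(Subgroup.center G), z ≠ 1 → φ z ≠ 1)
    (ρW : Representation ℂ G W)
    (hirrV : IsIrrep ρ) (hirrW : IsIrrep ρW)
    (hcV : HasCentralCharacter ρ φ) (hcW : HasCentralCharacter ρW φ) :
    ∃ e : V ≃ₗ[ℂ] W, ∀ (g : G) (v : V), e (ρ g v) = ρW g (e v) := by
  obtain ⟨i⟩ := core_iso ρ hcomm φ hker ρW hirrV hirrW hcV hcW
  let e : V ≃ₗ[ℂ] W := FDRep.isoToLinearEquiv i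
  refine ⟨e, fun g v => ?_⟩
  have h := FDRep.Iso.conj_ρ i g
  have h2 : ρW g (e v) = e (ρ g (e.symm (e v))) := by
    calc ρW g (e v) = ((FDRep.of ρW).ρ g) (e v) := rfl
    _ = ((FDRep.isoToLinearEquiv i).conj ((FDRep.of ρ).ρ g)) (e v) := by rw [h]
    _ = e (ρ g (e.symm (e v))) := rfl
  rw [h2, e.symm_apply_apply]

section Transport

variable {P : Type*} [Group P] {G0 : Type} [Group G0]

/-- Transport a representation along a group iso and a linear iso. -/
noncomputable def transportRep (μ : G0 ≃* P) {V : Type*} [AddCommGroup V] [Module ℂ V]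
    {V0 : Type} [AddCommGroup V0] [Module ℂ V0] (b : V ≃ₗ[ℂ] V0)
    (ρ : Representation ℂ P V) : Representation ℂ G0 V0 where
  toFun g := b.conj (ρ (μ g))
  map_one' := by
    show b.conj (ρ (μ 1)) = 1
    rw [map_one, map_one]
    exact b.conj_id
  map_mul' g h := by
    show b.conj (ρ (μ (g * h))) = b.conj (ρ (μ g)) * b.conj (ρ (μ h))
    rw [map_mul, map_mul, Module.End.mul_eq_comp, Module.End.mul_eq_comp, b.conj_comp]

lemma transportRep_apply (μ : G0 ≃* P) {V : Type*} [AddCommGroup V] [Module ℂ V]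
    {V0 : Type} [AddCommGroup V0] [Module ℂ V0] (b : V ≃ₗ[ℂ] V0)
    (ρ : Representation ℂ P V) (g : G0) (v : V) :
    transportRep μ b ρ g (b v) = b (ρ (μ g) v) := by
  show b.conj (ρ (μ g)) (b v) = _
  rw [LinearEquiv.conj_apply]
  simp

lemma transportRep_irrep (μ : G0 ≃* P) {V : Type*} [AddCommGroup V] [Module ℂ V]
    {V0 : Type} [AddCommGroup V0] [Module ℂ V0] (b : V ≃ₗ[ℂ] V0)
    (ρ : Representation ℂ P V) (h : IsIrrep ρ) : IsIrrep (transportRep μ b ρ) := by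
  obtain ⟨hnt, hsub⟩ := h
  constructor
  · exact Equiv.nontrivial b.symm.toEquiv
  · intro W hW
    have hW' : ∀ (g : P) (v : V), v ∈ W.comap (b : V →ₗ[ℂ] V0) →
        ρ g v ∈ W.comap (b : V →ₗ[ℂ] V0) := by
      intro g v hv
      rw [Submodule.mem_comap] at hv ⊢
      have := hW (μ.symm g) (b v) hv
      rw [transportRep_apply, μ.apply_symm_apply] at this
      exact this
    rcases hsub _ hW' with hbot | htop
    · left
      ext w
      simp only [Submodule.mem_bot]
      constructor
      · intro hw
        have : b.symm w ∈ W.comap (b : V →ₗ[ℂ] V0) := by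
          rw [Submodule.mem_comap]
          simpa using hw
        rw [hbot, Submodule.mem_bot] at this
        have := congrArg b this
        simpa using this
      · rintro rfl; exact W.zero_mem
    · right
      ext w
      simp only [Submodule.mem_top, iff_true]
      have : b.symm w ∈ W.comap (b : V →ₗ[ℂ] V0) := htop ▸ Submodule.mem_top
      rw [Submodule.mem_comap] at this
      simpa using this

/-- The induced map on centers. -/
def centerMap (μ : G0 ≃* P) : ↥(Subgroup.center G0) →* ↥(Subgroup.center P) where
  toFun z := ⟨μ z, by
    rw [Subgroup.mem_center_iff]
    intro p
    obtain ⟨q, rfl⟩ := μ.surjective p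
    rw [← map_mul, ← map_mul]
    congr 1
    exact (Subgroup.mem_center_iff.mp z.2 q)⟩
  map_one' := by ext; simp
  map_mul' z w := by ext; simp

lemma transportRep_cc (μ : G0 ≃* P) {V : Type*} [AddCommGroup V] [Module ℂ V]
    {V0 : Type} [AddCommGroup V0] [Module ℂ V0] (b : V ≃ₗ[ℂ] V0)
    (ρ : Representation ℂ P V) (φ : ↥(Subgroup.center P) →* ℂˣ)
    (h : HasCentralCharacter ρ φ) :
    HasCentralCharacter (transportRep μ b ρ) (φ.comp (centerMap μ)) := by
  intro z
  show b.conj (ρ (μ z)) = _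
  have : ρ ((μ : G0 →* P) (z : G0)) = (((φ (centerMap μ z) : ℂˣ) : ℂ) • LinearMap.id : V →ₗ[ℂ] V) :=
    h (centerMap μ z)
  rw [show (μ (z : G0)) = ((centerMap μ z : ↥(Subgroup.center P)) : P) from rfl]
  rw [h (centerMap μ z), map_smul, b.conj_id]
  rfl

end Transport

lemma key_unique {P : Type*} [Group P] [Finite P]
    (hcomm : ∀ x y : P, ⁅x, y⁆ ∈ Subgroup.center P)
    (φ : ↥(Subgroup.center P) →* ℂˣ)
    (hker : ∀ z : ↥(Subgroup.center P), z ≠ 1 → φ z ≠ 1)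
    {V₁ : Type*} [AddCommGroup V₁] [Module ℂ V₁] {V₂ : Type*} [AddCommGroup V₂] [Module ℂ V₂]
    (ρ₁ : Representation ℂ P V₁) (ρ₂ : Representation ℂ P V₂)
    (hirr₁ : IsIrrep ρ₁) (hirr₂ : IsIrrep ρ₂)
    (hc₁ : HasCentralCharacter ρ₁ φ) (hc₂ : HasCentralCharacter ρ₂ φ) :
    ∃ e : V₁ ≃ₗ[ℂ] V₂, ∀ (g : P) (v : V₁), e (ρ₁ g v) = ρ₂ g (e v) := by
  haveI := aux_findim ρ₁ hirr₁
  haveI := aux_findim ρ₂ hirr₂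
  obtain ⟨G0, hG, hF, ⟨ν⟩⟩ := Finite.exists_type_univ_nonempty_mulEquiv.{_, 0} P
  let μ : G0 ≃* P := ν.symm
  let b₁ := (Module.finBasis ℂ V₁).equivFun
  let b₂ := (Module.finBasis ℂ V₂).equivFun
  -- transported data
  have hcomm0 : ∀ x y : G0, ⁅x, y⁆ ∈ Subgroup.center G0 := by
    intro x y
    rw [Subgroup.mem_center_iff]
    intro h
    apply μ.injective
    rw [map_mul, map_mul, map_commutatorElement]
    exact Subgroup.mem_center_iff.mp (hcomm (μ x) (μ y)) (μ h)
  have hker0 : ∀ z : ↥(Subgroup.center G0), z ≠ 1 → (φ.comp (centerMap μ)) z ≠ 1 := by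
    intro z hz
    apply hker
    intro h1
    apply hz
    have : μ (z : G0) = 1 := congrArg Subtype.val h1
    have h2 : (z : G0) = 1 := by
      apply μ.injective
      rw [this, map_one]
    exact Subtype.ext h2
  have h0 := core_equiv (transportRep μ b₁ ρ₁) hcomm0 (φ.comp (centerMap μ)) hker0
    (transportRep μ b₂ ρ₂)
    (transportRep_irrep μ b₁ ρ₁ hirr₁) (transportRep_irrep μ b₂ ρ₂ hirr₂)
    (transportRep_cc μ b₁ ρ₁ φ hc₁) (transportRep_cc μ b₂ ρ₂ φ hc₂)
  obtain ⟨e0, he0⟩ := h0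
  refine ⟨b₁ ≪≫ₗ e0 ≪≫ₗ b₂.symm, fun g v => ?_⟩
  have h1 : b₁ (ρ₁ g v) = transportRep μ b₁ ρ₁ (ν g) (b₁ v) := by
    rw [transportRep_apply]
    congr 1
    show ρ₁ g v = ρ₁ (μ (ν g)) v
    rw [show μ (ν g) = g from ν.symm_apply_apply g]
  have h2 := he0 (ν g) (b₁ v)
  simp only [LinearEquiv.trans_apply]
  rw [h1, h2]
  have h3 : transportRep μ b₂ ρ₂ (ν g) (e0 (b₁ v))
      = b₂ (ρ₂ g (b₂.symm (e0 (b₁ v)))) := by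
    have := transportRep_apply μ b₂ ρ₂ (ν g) (b₂.symm (e0 (b₁ v)))
    rw [b₂.apply_symm_apply] at this
    rw [this]
    congr 1
    show ρ₂ (μ (ν g)) _ = ρ₂ g _
    rw [show μ (ν g) = g from ν.symm_apply_apply g]
  rw [h3, b₂.symm_apply_apply]


/-- For `p` an odd prime, a Heisenberg `𝔽_p`-group `P`, a nontrivial central
character `ψ`, and `ω` the Heisenberg representation attached to `ψ`
(an irreducible representation with central character `ψ`): the dual
(contragredient) representation `ω.dual` is not isomorphic to `ω`; the dual is
isomorphic to the Heisenberg representation `ω_{ψ⁻¹}`; and `ψ⁻¹ ≠ ψ`. -/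
theorem stmt_8 (p : ℕ) (hp : p.Prime) (hodd : p ≠ 2)
    (P : Type*) [Group P] [Finite P] (hP : IsHeisenberg p P)
    (ψ : ↥(Subgroup.center P) →* ℂˣ) (hψ : ψ ≠ 1)
    (V : Type*) [AddCommGroup V] [Module ℂ V] (ω : Representation ℂ P V)
    (hirr : IsIrrep ω) (hcent : HasCentralCharacter ω ψ) :
    (¬ ∃ e : Module.Dual ℂ V ≃ₗ[ℂ] V,
        ∀ (g : P) (f : Module.Dual ℂ V), e (ω.dual g f) = ω g (e f)) ∧
    (∀ (V' : Type u) (_ : AddCommGroup V') (_ : Module ℂ V')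
        (ω' : Representation ℂ P V'),
        IsIrrep ω' → HasCentralCharacter ω' ψ⁻¹ →
        ∃ e : Module.Dual ℂ V ≃ₗ[ℂ] V',
          ∀ (g : P) (f : Module.Dual ℂ V), e (ω.dual g f) = ω' g (e f)) ∧
    ψ⁻¹ ≠ ψ := by
  have hpsine : ψ⁻¹ ≠ ψ := aux_psi_ne hp hodd hP.card_center ψ hψ
  haveI hfd : FiniteDimensional ℂ V := aux_findim ω hirr
  have hdualcc : HasCentralCharacter ω.dual ψ⁻¹ := aux_dual_cc ω ψ hcent
  have hdualirr : IsIrrep ω.dual := aux_dual_irrep ω hirr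
  have hker : ∀ z : ↥(Subgroup.center P), z ≠ 1 → ψ z ≠ 1 :=
    aux_ker hp hP.card_center ψ hψ
  have hkerinv : ∀ z : ↥(Subgroup.center P), z ≠ 1 → ψ⁻¹ z ≠ 1 := by
    intro z hz h
    apply hker z hz
    have : (ψ z)⁻¹ = 1 := h
    rwa [inv_eq_one] at this
  refine ⟨?_, ?_, hpsine⟩
  · rintro ⟨e, he⟩
    apply hpsine
    haveI := hirr.1
    ext z
    obtain ⟨v, hv⟩ := exists_ne (0 : V)
    have h1 := he (z : P) (e.symm v)
    have h2 : ω.dual (z : P) (e.symm v) = ((ψ⁻¹ z : ℂˣ) : ℂ) • (e.symm v) := by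
      rw [hdualcc z]; rfl
    have h3 : ω (z : P) v = ((ψ z : ℂˣ) : ℂ) • v := by
      rw [hcent z]; rfl
    rw [h2, map_smul, e.apply_symm_apply, h3] at h1
    have h4 : (((ψ⁻¹ z : ℂˣ) : ℂ) - ((ψ z : ℂˣ) : ℂ)) • v = 0 := by
      rw [sub_smul, h1, sub_self]
    rcases smul_eq_zero.mp h4 with h5 | h5
    · exact sub_eq_zero.mp h5
    · exact absurd h5 hv
  · intro V' iAC iM ω' hirr' hcc'
    letI := iAC; letI := iM
    exact key_unique hP.commutator_mem ψ⁻¹ hkerinv ω.dual ω' hdualirr hirr' hdualcc hcc'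
end

section
/- Let A be a finite group, let W be a finite-dimensional right module over the quaternions ℍ, and let ρ₁, ρ₂ : A → GL_ℍ(W) be homomorphisms into the group of ℍ-linear automorphisms of W. Fix an ℝ-algebra embedding ℂ ↪ ℍ and view W as a complex vector space by restriction of scalars. Suppose the resulting complex representations of A underlying ρ₁ and ρ₂ are irreducible and isomorphic as complex representations. Then ρ₁ and ρ₂ are isomorphic as ℍ-linear representations, i.e., there exists an ℍ-linear automorphism T of W with T ∘ ρ₁(a) = ρ₂(a) ∘ T for all a ∈ A. -/
set_option maxHeartbeats 2000000 in
/-- Let `A` be a finite group, `W` a finite-dimensional right module over the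
quaternions `ℍ = Quaternion ℝ` (encoded as a module over `ℍᵐᵒᵖ`), and
`ρ₁, ρ₂ : A → GL_ℍ(W)` homomorphisms into the group of `ℍ`-linear
automorphisms of `W`.  Fix an `ℝ`-algebra embedding `φ : ℂ ↪ ℍ` and view `W`
as a complex vector space by restriction of scalars along `φ`.  If the
resulting complex representations underlying `ρ₁` and `ρ₂` are irreducible and
isomorphic as complex representations, then `ρ₁` and `ρ₂` are isomorphic as
`ℍ`-linear representations. -/
theorem stmt_11 (A : Type*) [Group A] [Finite A]
    (W : Type*) [AddCommGroup W] [Module (Quaternion ℝ)ᵐᵒᵖ W]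
    [Module.Finite (Quaternion ℝ)ᵐᵒᵖ W]
    (ρ₁ ρ₂ : A →* (W ≃ₗ[(Quaternion ℝ)ᵐᵒᵖ] W))
    (φ : ℂ →ₐ[ℝ] Quaternion ℝ) (hφ : Function.Injective φ)
    [Module ℂ W]
    (hsmul : ∀ (c : ℂ) (w : W), c • w = MulOpposite.op (φ c) • w)
    (h1 : Nontrivial W ∧ ∀ U : Submodule ℂ W,
      (∀ (a : A) (w : W), w ∈ U → ρ₁ a w ∈ U) → U = ⊥ ∨ U = ⊤)
    (h2 : Nontrivial W ∧ ∀ U : Submodule ℂ W,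
      (∀ (a : A) (w : W), w ∈ U → ρ₂ a w ∈ U) → U = ⊥ ∨ U = ⊤)
    (hiso : ∃ e : W ≃ₗ[ℂ] W, ∀ (a : A) (w : W), e (ρ₁ a w) = ρ₂ a (e w)) :
    ∃ T : W ≃ₗ[(Quaternion ℝ)ᵐᵒᵖ] W,
      ∀ (a : A) (w : W), T (ρ₁ a w) = ρ₂ a (T w) := by
  obtain ⟨q, hqdef⟩ : ∃ q : Quaternion ℝ, q = φ Complex.I := ⟨_, rfl⟩
  have hq : q * q = -1 := by
    rw [hqdef, ← map_mul, Complex.I_mul_I, map_neg, map_one]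
  -- components
  have hre1 := congrArg QuaternionAlgebra.re hq
  have hi := congrArg QuaternionAlgebra.imI hq
  have hj := congrArg QuaternionAlgebra.imJ hq
  have hk := congrArg QuaternionAlgebra.imK hq
  simp only [Quaternion.re_mul, Quaternion.imI_mul, Quaternion.imJ_mul, Quaternion.imK_mul,
    Quaternion.re_neg, Quaternion.re_one, Quaternion.imI_neg, Quaternion.imI_one,
    Quaternion.imJ_neg, Quaternion.imJ_one, Quaternion.imK_neg, Quaternion.imK_one] at hre1 hi hj hk
  have hqre : q.re = 0 := by
    have h1 : q.re ^ 2 * (q.imI^2 + q.imJ^2 + q.imK^2) = 0 := by nlinarith [hi, hj, hk]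
    have h2 : q.imI^2 + q.imJ^2 + q.imK^2 = 1 + q.re^2 := by nlinarith [hre1]
    nlinarith [sq_nonneg q.re]
  have hqsum : q.imI^2 + q.imJ^2 + q.imK^2 = 1 := by nlinarith [hre1, hqre]
  -- construct j
  obtain ⟨j, hjre, hjdot, hjnorm⟩ : ∃ j : Quaternion ℝ, j.re = 0 ∧
      j.imI * q.imI + j.imJ * q.imJ + j.imK * q.imK = 0 ∧
      j.imI^2 + j.imJ^2 + j.imK^2 = 1 := by
    by_cases hbc : q.imJ = 0 ∧ q.imK = 0
    · exact ⟨⟨0, 0, 1, 0⟩, rfl, by simp [hbc.1], by norm_num⟩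
    · have hpos : 0 < q.imJ^2 + q.imK^2 := by
        rcases not_and_or.mp hbc with h | h <;> positivity
      set t := Real.sqrt (q.imJ^2 + q.imK^2) with ht
      have htpos : 0 < t := Real.sqrt_pos.mpr hpos
      have ht2 : t^2 = q.imJ^2 + q.imK^2 := Real.sq_sqrt hpos.le
      refine ⟨⟨0, 0, q.imK / t, -q.imJ / t⟩, rfl, by ring, ?_⟩
      field_simp
      linarith [ht2]
  have hjj : j * j = -1 := by
    ext <;> simp [Quaternion.re_mul, Quaternion.imI_mul, Quaternion.imJ_mul,
      Quaternion.imK_mul, hjre, Quaternion.re_one, Quaternion.imI_one, Quaternion.imJ_one,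
      Quaternion.imK_one] <;> linarith [hjnorm]
  have hanti : j * q = -(q * j) := by
    ext <;> simp [Quaternion.re_mul, Quaternion.imI_mul, Quaternion.imJ_mul,
      Quaternion.imK_mul, hjre, hqre] <;> linarith [hjdot]
  -- φ in terms of q
  have hφc : ∀ c : ℂ, φ c = (c.re : ℝ) • (1 : Quaternion ℝ) + (c.im : ℝ) • q := by
    intro c
    conv_lhs => rw [show c = (c.re : ℂ) + (c.im : ℂ) * Complex.I from (Complex.re_add_im c).symm]
    rw [map_add, map_mul]
    rw [show ((c.re : ℝ) : ℂ) = algebraMap ℝ ℂ c.re from rfl,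
      show ((c.im : ℝ) : ℂ) = algebraMap ℝ ℂ c.im from rfl,
      AlgHom.commutes, AlgHom.commutes, ← hqdef,
      Algebra.algebraMap_eq_smul_one, Algebra.algebraMap_eq_smul_one,
      smul_mul_assoc, one_mul]
  have hjφ : ∀ c : ℂ, j * φ c = φ (starRingEnd ℂ c) * j := by
    intro c
    rw [hφc c, hφc (starRingEnd ℂ c)]
    simp only [Complex.conj_re, Complex.conj_im, mul_add, add_mul, mul_smul_comm,
      smul_mul_assoc, one_mul, mul_one, hanti, neg_smul, smul_neg, neg_mul]
  -- centralizer
  have hcomm : ∀ x : Quaternion ℝ, x * q = q * x → ∃ c : ℂ, x = φ c := by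
    intro x hx
    refine ⟨⟨x.re, x.imI * q.imI + x.imJ * q.imJ + x.imK * q.imK⟩, ?_⟩
    have h1 := congrArg QuaternionAlgebra.imI hx
    have h2 := congrArg QuaternionAlgebra.imJ hx
    have h3 := congrArg QuaternionAlgebra.imK hx
    simp only [Quaternion.imI_mul, Quaternion.imJ_mul, Quaternion.imK_mul, hqre] at h1 h2 h3
    have e1 : x.imJ * q.imK = x.imK * q.imJ := by linarith
    have e2 : x.imK * q.imI = x.imI * q.imK := by linarith
    have e3 : x.imI * q.imJ = x.imJ * q.imI := by linarith
    rw [hφc]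
    ext
    · simp [hqre, Quaternion.re_one]
    · show x.imI = _
      simp only [Quaternion.imI_add, Quaternion.imI_smul, Quaternion.imI_one, smul_zero,
        smul_eq_mul, zero_add, mul_zero, add_zero]
      linear_combination (-x.imI) * hqsum + q.imJ * e3 - q.imK * e2
    · show x.imJ = _
      simp only [Quaternion.imJ_add, Quaternion.imJ_smul, Quaternion.imJ_one, smul_zero,
        smul_eq_mul, zero_add, mul_zero, add_zero]
      linear_combination (-x.imJ) * hqsum - q.imI * e3 + q.imK * e1
    · show x.imK = _
      simp only [Quaternion.imK_add, Quaternion.imK_smul, Quaternion.imK_one, smul_zero,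
        smul_eq_mul, zero_add, mul_zero, add_zero]
      linear_combination (-x.imK) * hqsum + q.imI * e2 - q.imJ * e1
  -- spanning
  have hspan : ∀ h : Quaternion ℝ, ∃ c₁ c₂ : ℂ, h = φ c₁ + φ c₂ * j := by
    intro h
    have hcu : (h - q * h * q) * q = q * (h - q * h * q) := by
      have e1 : (h - q * h * q) * q = h * q - q * h * (q * q) := by noncomm_ring
      have e2 : q * (h - q * h * q) = q * h - (q * q) * h * q := by noncomm_ring
      rw [e1, e2, hq]; noncomm_ring
    have hzj : ((h + q * h * q) * (-j)) * j = h + q * h * q := by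
      have e0 : ((h + q * h * q) * (-j)) * j = (h + q * h * q) * -(j * j) := by noncomm_ring
      rw [e0, hjj]; noncomm_ring
    have hcz : ((h + q * h * q) * (-j)) * q = q * ((h + q * h * q) * (-j)) := by
      have hvq : (h + q * h * q) * q = -(q * (h + q * h * q)) := by
        have e1 : (h + q * h * q) * q = h * q + q * h * (q * q) := by noncomm_ring
        have e2 : q * (h + q * h * q) = q * h + (q * q) * h * q := by noncomm_ring
        rw [e1, e2, hq]; noncomm_ring
      have e1 : ((h + q * h * q) * (-j)) * q = -((h + q * h * q) * (j * q)) := by noncomm_ring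
      rw [hanti] at e1
      have e2 : -((h + q * h * q) * -(q * j)) = ((h + q * h * q) * q) * j := by noncomm_ring
      rw [e1, e2, hvq]
      noncomm_ring
    obtain ⟨c₁, hc₁⟩ := hcomm _ hcu
    obtain ⟨c₂, hc₂⟩ := hcomm _ hcz
    refine ⟨(2⁻¹ : ℝ) • c₁, (2⁻¹ : ℝ) • c₂, ?_⟩
    have hhalf : ∀ c : ℂ, φ ((2⁻¹ : ℝ) • c) = (2⁻¹ : ℝ) • φ c := fun c =>
      map_smul φ.toLinearMap _ _
    rw [hhalf, hhalf, ← hc₁, ← hc₂, smul_mul_assoc, hzj, ← smul_add]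
    have : (h - q * h * q) + (h + q * h * q) = (2 : ℝ) • h := by
      rw [two_smul]; noncomm_ring
    rw [this, smul_smul]
    norm_num
  classical
  obtain ⟨e, he⟩ := hiso
  haveI : Nontrivial W := h1.1
  set J : (Quaternion ℝ)ᵐᵒᵖ := MulOpposite.op j with hJdef
  -- key smul facts
  have hJc : ∀ (c : ℂ) (w : W), J • (c • w) = (starRingEnd ℂ c) • (J • w) := by
    intro c w
    rw [hsmul c w, smul_smul, hJdef, ← MulOpposite.op_mul]
    have h : φ c * j = j * φ (starRingEnd ℂ c) := by
      rw [hjφ (starRingEnd ℂ c), Complex.conj_conj]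
    rw [h, MulOpposite.op_mul, ← smul_smul, ← hsmul]
  have hJJ : ∀ w : W, J • J • w = -w := by
    intro w
    rw [smul_smul, hJdef, ← MulOpposite.op_mul, hjj]
    have h : ((-1 : Quaternion ℝ)) = φ (-1 : ℂ) := by rw [map_neg, map_one]
    rw [h, ← hsmul (-1 : ℂ) w, neg_one_smul]
  have hJinj : Function.Injective (fun x : W => J • x) := by
    intro x y hxy
    have h2' := congrArg (fun z => J • z) hxy
    simp only at h2'
    rw [hJJ, hJJ] at h2'
    exact neg_injective h2'
  -- decomposition of an arbitrary MulOpposite.op-scalar action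
  have hop : ∀ (m : (Quaternion ℝ)ᵐᵒᵖ) (w : W), ∃ c₁ c₂ : ℂ,
      m • w = c₁ • w + J • (c₂ • w) ∧
      ∀ u : W, m • u = c₁ • u + J • (c₂ • u) := by
    intro m w
    obtain ⟨c₁, c₂, hdec⟩ := hspan m.unop
    have hm : m = MulOpposite.op (φ c₁ + φ c₂ * j) := by rw [← hdec, MulOpposite.op_unop]
    have key : ∀ u : W, m • u = c₁ • u + J • (c₂ • u) := by
      intro u
      rw [hm, MulOpposite.op_add, add_smul, MulOpposite.op_mul, mul_smul, ← hsmul, ← hsmul, hJdef]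
    exact ⟨c₁, c₂, key w, key⟩
  -- ℂ-linearity of the ρ's
  have hρc : ∀ (ρ : W ≃ₗ[(Quaternion ℝ)ᵐᵒᵖ] W) (c : ℂ) (w : W), ρ (c • w) = c • ρ w := by
    intro ρ c w
    rw [hsmul, map_smul, hsmul]
  -- finite dimensionality over ℂ
  haveI hfin : FiniteDimensional ℂ W := by
    obtain ⟨S, hS⟩ := Module.finite_def.mp ‹Module.Finite (Quaternion ℝ)ᵐᵒᵖ W›
    set Tset : Finset W := S ∪ S.image (fun s => J • s) with hTset
    set V : Submodule ℂ W := Submodule.span ℂ (Tset : Set W) with hV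
    have hmemV : ∀ x ∈ Tset, x ∈ V := fun x hx => Submodule.subset_span (Finset.mem_coe.mpr hx)
    have hJspan : ∀ u ∈ V, J • u ∈ V := by
      intro u hu
      induction hu using Submodule.span_induction with
      | mem x hx =>
        rcases Finset.mem_union.mp (Finset.mem_coe.mp hx) with hx' | hx'
        · exact hmemV _ (Finset.mem_union_right _ (Finset.mem_image.mpr ⟨x, hx', rfl⟩))
        · obtain ⟨s, hs, rfl⟩ := Finset.mem_image.mp hx'
          rw [hJJ]
          exact V.neg_mem (hmemV _ (Finset.mem_union_left _ hs))
      | zero => rw [smul_zero]; exact V.zero_mem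
      | add x y _ _ hx hy => rw [smul_add]; exact V.add_mem hx hy
      | smul c x _ hx => rw [hJc]; exact V.smul_mem _ hx
    refine Module.finite_def.mpr ⟨Tset, ?_⟩
    rw [← hV, eq_top_iff]
    intro w hwtop
    clear hwtop
    have hw : w ∈ Submodule.span (Quaternion ℝ)ᵐᵒᵖ (S : Set W) := hS ▸ Submodule.mem_top
    induction hw using Submodule.span_induction with
    | mem x hx => exact hmemV _ (Finset.mem_union_left _ (Finset.mem_coe.mp hx))
    | zero => exact V.zero_mem
    | add x y _ _ hx hy => exact V.add_mem hx hy
    | smul m x _ hx =>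
      obtain ⟨c₁, c₂, hx', _⟩ := hop m x
      rw [hx']
      exact V.add_mem (V.smul_mem _ hx) (hJspan _ (V.smul_mem _ hx))
  -- the conjugate-twisted intertwiner g
  have hg_smul : ∀ (c : ℂ) (w : W), J • e (J • (c • w)) = c • (J • e (J • w)) := by
    intro c w
    rw [hJc, map_smul, hJc, Complex.conj_conj]
  set gl : W →ₗ[ℂ] W :=
    { toFun := fun w => J • e (J • w)
      map_add' := by intro x y; simp only [smul_add, map_add]
      map_smul' := by intro c w; exact hg_smul c w } with hgl
  have he_symm : ∀ (a : A) (w : W), e.symm (ρ₂ a w) = ρ₁ a (e.symm w) := by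
    intro a w
    apply e.injective
    rw [e.apply_symm_apply, he, e.apply_symm_apply]
  have hgl_int : ∀ (a : A) (w : W), gl (ρ₁ a w) = ρ₂ a (gl w) := by
    intro a w
    show J • e (J • ρ₁ a w) = ρ₂ a (J • e (J • w))
    rw [← map_smul (ρ₁ a) J w, he, ← map_smul (ρ₂ a) J]
  -- Schur
  set f : Module.End ℂ W := gl ∘ₗ (e.symm : W →ₗ[ℂ] W) with hf
  obtain ⟨lam, hlam⟩ := Module.End.exists_eigenvalue f
  obtain ⟨v, hv⟩ := hlam.exists_hasEigenvector
  have hU : Module.End.eigenspace f lam = ⊤ := by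
    have hinv : ∀ (a : A), ∀ w ∈ Module.End.eigenspace f lam,
        ρ₂ a w ∈ Module.End.eigenspace f lam := by
      intro a w hw
      rw [Module.End.mem_eigenspace_iff] at hw ⊢
      have hfc : f (ρ₂ a w) = ρ₂ a (f w) := by
        show gl (e.symm (ρ₂ a w)) = ρ₂ a (gl (e.symm w))
        rw [he_symm, hgl_int]
      rw [hfc, hw, hρc]
    rcases h2.2 (Module.End.eigenspace f lam) hinv with hbot | htop
    · have hv1 : v ∈ Module.End.eigenspace f lam :=
        Module.End.mem_eigenspace_iff.mpr hv.apply_eq_smul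
      rw [hbot] at hv1
      exact absurd ((Submodule.mem_bot ℂ).mp hv1) hv.2
    · exact htop
  have hgle : ∀ w : W, J • e (J • w) = lam • e w := by
    intro w
    have hw : e w ∈ Module.End.eigenspace f lam := hU ▸ Submodule.mem_top
    rw [Module.End.mem_eigenspace_iff] at hw
    have h3 : f (e w) = gl w := by show gl (e.symm (e w)) = gl w; rw [e.symm_apply_apply]
    rw [h3] at hw
    exact hw
  -- |lam| = 1
  have hlam1 : (starRingEnd ℂ) lam * lam = 1 := by
    obtain ⟨w₀, hw₀⟩ := exists_ne (0 : W)
    have hkey : ∀ w : W, (lam * (starRingEnd ℂ) lam) • (J • e w) = J • e w := by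
      intro w
      have a1 : J • e (J • (J • w)) = lam • e (J • w) := hgle (J • w)
      have a2 : J • (J • e (J • w)) = J • (lam • e w) := congrArg (fun z => J • z) (hgle w)
      rw [hJJ, map_neg, smul_neg] at a1
      rw [hJJ, hJc] at a2
      have a2' : e (J • w) = -((starRingEnd ℂ) lam • (J • e w)) := by
        rw [← neg_eq_iff_eq_neg, a2]
      rw [a2', smul_neg, smul_smul] at a1
      exact (neg_injective a1).symm
    have hnz : J • e w₀ ≠ 0 := by
      intro hz
      have := congrArg (fun z => J • z) hz
      simp only [smul_zero] at this
      rw [hJJ] at this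
      exact hw₀ (e.injective (by rw [map_zero]; exact neg_eq_zero.mp this))
    have := hkey w₀
    have hsub : (lam * (starRingEnd ℂ) lam - 1) • (J • e w₀) = 0 := by
      rw [sub_smul, one_smul, this, sub_self]
    rcases smul_eq_zero.mp hsub with h0 | h0
    · rw [mul_comm] at h0; linear_combination h0
    · exact absurd h0 hnz
  -- square root
  obtain ⟨μ, hμ2⟩ := IsAlgClosed.exists_pow_nat_eq (-lam) (n := 2) (by norm_num)
  have hμν : (starRingEnd ℂ) μ * μ = 1 := by
    have h1' : ((starRingEnd ℂ) μ * μ) ^ 2 = 1 := by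
      have : (starRingEnd ℂ) (μ ^ 2) = (starRingEnd ℂ) μ ^ 2 := by rw [map_pow]
      calc ((starRingEnd ℂ) μ * μ) ^ 2 = (starRingEnd ℂ) (μ ^ 2) * μ ^ 2 := by ring_nf; rw [← this]; ring
        _ = (starRingEnd ℂ) (-lam) * (-lam) := by rw [hμ2]
        _ = (starRingEnd ℂ) lam * lam := by rw [map_neg]; ring
        _ = 1 := hlam1
    have h2' : (starRingEnd ℂ) μ * μ = (Complex.normSq μ : ℂ) := by
      rw [Complex.normSq_eq_conj_mul_self]
    have h3' : (Complex.normSq μ : ℝ) ^ 2 = 1 := by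
      have := h1'
      rw [h2'] at this
      exact_mod_cast this
    have h4' : (Complex.normSq μ : ℝ) = 1 := by nlinarith [Complex.normSq_nonneg μ]
    rw [h2', h4']; norm_num
  have hμ0 : μ ≠ 0 := by
    intro h0
    rw [h0, map_zero, zero_mul] at hμν
    exact zero_ne_one hμν
  have hμlam : (starRingEnd ℂ) μ * lam = -μ := by
    have hlam' : lam = -μ ^ 2 := by linear_combination hμ2
    rw [hlam']
    calc (starRingEnd ℂ) μ * (-μ ^ 2) = -(((starRingEnd ℂ) μ * μ) * μ) := by ring
      _ = -μ := by rw [hμν, one_mul]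
  -- T commutes with J
  have hTj : ∀ w : W, μ • e (J • w) = J • (μ • e w) := by
    intro w
    apply hJinj
    show J • (μ • e (J • w)) = J • (J • (μ • e w))
    rw [hJc, hgle, smul_smul, hμlam, hJJ, neg_smul]
  refine ⟨{ toFun := fun w => μ • e w
            map_add' := fun x y => by simp only [map_add, smul_add]
            map_smul' := fun m w => by
              obtain ⟨c₁, c₂, _, key⟩ := hop m w
              show μ • e (m • w) = m • (μ • e w)
              rw [key w, map_add, smul_add, map_smul, smul_comm μ c₁, hTj, map_smul,
                smul_comm μ c₂, ← key (μ • e w)]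
            invFun := fun w => e.symm (μ⁻¹ • w)
            left_inv := fun w => by
              show e.symm (μ⁻¹ • (μ • e w)) = w
              rw [smul_smul, inv_mul_cancel₀ hμ0, one_smul, e.symm_apply_apply]
            right_inv := fun w => by
              show μ • e (e.symm (μ⁻¹ • w)) = w
              rw [e.apply_symm_apply, smul_smul, mul_inv_cancel₀ hμ0, one_smul] }, ?_⟩
  intro a w
  show μ • e (ρ₁ a w) = ρ₂ a (μ • e w)
  rw [he, hρc]
end

section
/- Let P and H be finite groups, let U ⊴ P be a normal subgroup, let P act on H by automorphisms, and let (π, V) be a finite-dimensional complex representation of the semidirect product P ⋉ H such that the restriction π|_H is irreducible. Suppose that every element of U acts trivially on H and that U ⊆ [P, U] (every element of U is a product of commutators [p, u] with p ∈ P, u ∈ U). Then π|_U is trivial, i.e., π(u, 1) = id_V for all u ∈ U. -/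
/-- Let `P` and `H` be finite groups, `U ⊴ P` a normal subgroup, `P` acting on
`H` by automorphisms, and `(π, V)` a finite-dimensional complex representation
of `P ⋉ H` (encoded as `H ⋊[φ] P`) whose restriction to `H` is irreducible.
If every element of `U` acts trivially on `H` and `U ⊆ [P, U]`, then `π` is
trivial on `U`. -/
theorem stmt_14 (P H : Type*) [Group P] [Group H] [Finite P] [Finite H]
    (φ : P →* MulAut H) (U : Subgroup P) (hU : U.Normal)
    (V : Type*) [AddCommGroup V] [Module ℂ V] [FiniteDimensional ℂ V]
    (π : Representation ℂ (H ⋊[φ] P) V)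
    (hrestr_irr : Nontrivial V ∧
      ∀ W : Submodule ℂ V,
        (∀ (h : H) (v : V), v ∈ W → π (SemidirectProduct.inl h) v ∈ W) →
          W = ⊥ ∨ W = ⊤)
    (htriv : ∀ u ∈ U, ∀ h : H, φ u h = h)
    (hcomm : U ≤ ⁅(⊤ : Subgroup P), U⁆) :
    ∀ u ∈ U, π (SemidirectProduct.inr u) = LinearMap.id := by
  obtain ⟨hV, hirr⟩ := hrestr_irr
  -- Schur: π(inr u) is scalar for u ∈ U
  have key : ∀ u ∈ U, ∃ c : ℂ, π (SemidirectProduct.inr u) = c • (1 : Module.End ℂ V) := by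
    intro u hu
    set f : Module.End ℂ V := π (SemidirectProduct.inr u) with hf
    have hcommf : ∀ h : H, f * π (SemidirectProduct.inl h) = π (SemidirectProduct.inl h) * f := by
      intro h
      have hmul : (SemidirectProduct.inr u : H ⋊[φ] P) * SemidirectProduct.inl h
          = SemidirectProduct.inl h * SemidirectProduct.inr u := by
        ext
        · simp [htriv u hu]
        · simp
      rw [hf, ← map_mul, hmul, map_mul]
    obtain ⟨c, hc⟩ := Module.End.exists_eigenvalue f
    have hW := hirr (f.eigenspace c) ?_
    · rcases hW with hbot | htop
      · exact absurd hbot hc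
      · refine ⟨c, ?_⟩
        ext v
        have hv : v ∈ f.eigenspace c := htop ▸ Submodule.mem_top
        rw [Module.End.mem_eigenspace_iff] at hv
        simpa using hv
    · intro h v hv
      rw [Module.End.mem_eigenspace_iff] at hv ⊢
      have := congrArg (fun g : Module.End ℂ V => g v) (hcommf h)
      simp only [Module.End.mul_apply] at this
      rw [this, hv, map_smul]
  -- commutators map to 1
  have comm1 : ∀ p : P, ∀ u ∈ U, π (SemidirectProduct.inr (p * u * p⁻¹ * u⁻¹)) = 1 := by
    intro p u hu
    obtain ⟨c, hc⟩ := key u hu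
    have hinv : π (SemidirectProduct.inr u) * π (SemidirectProduct.inr u⁻¹) = 1 := by
      rw [← map_mul, ← map_mul, mul_inv_cancel]; simp
    have hc0 : c ≠ 0 := by
      intro h0
      rw [hc, h0, zero_smul, zero_mul] at hinv
      exact zero_ne_one hinv
    have hinv' : π (SemidirectProduct.inr u⁻¹) = c⁻¹ • (1 : Module.End ℂ V) := by
      rw [hc, smul_mul_assoc, one_mul] at hinv
      calc π (SemidirectProduct.inr u⁻¹)
          = (c⁻¹ * c) • π (SemidirectProduct.inr u⁻¹) := by
            rw [inv_mul_cancel₀ hc0, one_smul]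
        _ = c⁻¹ • (1 : Module.End ℂ V) := by rw [mul_smul, hinv]
    have hpp : π (SemidirectProduct.inr p) * π (SemidirectProduct.inr p⁻¹) = 1 := by
      rw [← map_mul, ← map_mul, mul_inv_cancel]; simp
    show π (SemidirectProduct.inr (p * u * p⁻¹ * u⁻¹)) = 1
    rw [map_mul, map_mul, map_mul, map_mul, map_mul, map_mul, hc, hinv']
    simp only [mul_smul_comm, smul_mul_assoc, smul_smul, mul_one, one_mul]
    rw [hpp, inv_mul_cancel₀ hc0, one_smul]
  -- kernel subgroup
  let K : Subgroup P :=
    { carrier := {p : P | π (SemidirectProduct.inr p) = 1}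
      one_mem' := by simp
      mul_mem' := by
        intro a b ha hb
        simp only [Set.mem_setOf_eq] at *
        rw [map_mul, map_mul, ha, hb, one_mul]
      inv_mem' := by
        intro a ha
        simp only [Set.mem_setOf_eq] at *
        have : π (SemidirectProduct.inr a⁻¹) * π (SemidirectProduct.inr a) = 1 := by
          rw [← map_mul, ← map_mul, inv_mul_cancel]; simp
        rwa [ha, mul_one] at this }
  have hKle : ⁅(⊤ : Subgroup P), U⁆ ≤ K := by
    rw [Subgroup.commutator_le]
    intro g _ u hu
    exact comm1 g u hu
  intro u hu
  exact hKle (hcomm hu)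
end

section
/- Let p be a prime, let P be a Heisenberg 𝔽_p-group with |P| > p, and let ψ : Z(P) → ℂˣ be a nontrivial character, with Heisenberg representation ω_ψ on the complex vector space V. Conjugation induces a well-defined action of V_P := P/Z(P) on P by automorphisms (since Z(P) is central). Then there is no group homomorphism π : V_P ⋉ P → GL(V) satisfying π(1, x) = ω_ψ(x) for all x ∈ P; i.e., the Heisenberg representation does not extend to the semidirect product V_P ⋉ P. -/
open scoped commutatorElement

/-- The (well-defined) conjugation action of `V_P = P/Z(P)` on `P`. -/
def conjQuot (P : Type*) [Group P] : P ⧸ Subgroup.center P →* MulAut P :=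
  QuotientGroup.lift (Subgroup.center P) MulAut.conj
    (fun z hz => by
      ext x
      rw [MulAut.conj_apply, MulAut.one_apply,
        ← Subgroup.mem_center_iff.mp hz x, mul_inv_cancel_right])

/-- An irreducible representation of a finite group is finite-dimensional. -/
lemma findim_of_irrep {G : Type*} [Group G] [Finite G] {V : Type*} [AddCommGroup V]
    [Module ℂ V] {ρ : Representation ℂ G V} (hirr : IsIrrep ρ) :
    FiniteDimensional ℂ V := by
  haveI : Nontrivial V := hirr.1
  obtain ⟨u, hu⟩ := exists_ne (0 : V)
  set W := Submodule.span ℂ (Set.range fun g : G => ρ g u) with hWdef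
  have hinv : ∀ (g : G) (x : V), x ∈ W → ρ g x ∈ W := by
    intro g x hx
    induction hx using Submodule.span_induction with
    | mem y hy =>
      obtain ⟨h, rfl⟩ := hy
      exact Submodule.subset_span ⟨g * h, by simp [map_mul]⟩
    | zero => simp
    | add y z _ _ hy hz => rw [map_add]; exact W.add_mem hy hz
    | smul c y _ hy => rw [map_smul]; exact W.smul_mem c hy
  have hne : W ≠ ⊥ := by
    intro h0
    have hmem : u ∈ W := Submodule.subset_span ⟨1, by simp⟩
    rw [h0, Submodule.mem_bot] at hmem
    exact hu hmem
  have htop : W = ⊤ := (hirr.2 W hinv).resolve_left hne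
  haveI : Module.Finite ℂ W :=
    Module.Finite.span_of_finite ℂ (Set.finite_range _)
  exact Module.Finite.equiv ((LinearEquiv.ofEq W ⊤ htop).trans (Submodule.topEquiv))

/-- Schur's lemma. -/
lemma schur_scalar_s15 {G : Type*} [Group G] {V : Type*} [AddCommGroup V] [Module ℂ V]
    [FiniteDimensional ℂ V] {ρ : Representation ℂ G V} (hirr : IsIrrep ρ)
    (T : Module.End ℂ V) (hT : ∀ g : G, T * ρ g = ρ g * T) :
    ∃ μ : ℂ, ∀ v : V, T v = μ • v := by
  haveI : Nontrivial V := hirr.1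
  obtain ⟨μ, hμ⟩ := Module.End.exists_eigenvalue T
  refine ⟨μ, ?_⟩
  have hW : ∀ (g : G) (v : V), v ∈ T.eigenspace μ → ρ g v ∈ T.eigenspace μ := by
    intro g v hv
    rw [Module.End.mem_eigenspace_iff] at hv ⊢
    have h1 : T (ρ g v) = ρ g (T v) := by
      have h2 := congrArg (fun f : Module.End ℂ V => f v) (hT g)
      simpa [Module.End.mul_apply] using h2
    rw [h1, hv, map_smul]
  have hne : T.eigenspace μ ≠ ⊥ := hμ
  have htop : T.eigenspace μ = ⊤ := (hirr.2 _ hW).resolve_left hne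
  intro v
  exact Module.End.mem_eigenspace_iff.mp (htop ▸ Submodule.mem_top)

/-- For `P` a Heisenberg `𝔽_p`-group with `|P| > p`, `ψ` a nontrivial central
character and `ω` the Heisenberg representation attached to `ψ`, there is no
representation of the semidirect product `V_P ⋉ P` (for the conjugation
action of `V_P = P/Z(P)` on `P`) extending `ω`. -/
theorem stmt_15 (p : ℕ) (hp : p.Prime)
    (P : Type*) [Group P] [Finite P] (hP : IsHeisenberg p P)
    (hbig : p < Nat.card P)
    (ψ : ↥(Subgroup.center P) →* ℂˣ) (hψ : ψ ≠ 1)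
    (V : Type*) [AddCommGroup V] [Module ℂ V] (ω : Representation ℂ P V)
    (hirr : IsIrrep ω) (hcent : HasCentralCharacter ω ψ) :
    ¬ ∃ π : Representation ℂ (P ⋊[conjQuot P] (P ⧸ Subgroup.center P)) V,
        ∀ x : P, π (SemidirectProduct.inl x) = ω x := by
  rintro ⟨π, hπ⟩
  haveI : Nontrivial V := hirr.1
  haveI : FiniteDimensional ℂ V := findim_of_irrep hirr
  -- a nontrivial value of ψ
  obtain ⟨z₀, hz₀⟩ : ∃ z₀ : ↥(Subgroup.center P), ψ z₀ ≠ 1 := by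
    by_contra h
    push_neg at h
    exact hψ (MonoidHom.ext fun z => h z)
  -- P is not commutative
  obtain ⟨a, b, hab⟩ : ∃ a b : P, ⁅b, a⁆ ≠ 1 := by
    by_contra h
    push_neg at h
    have hZtop : Subgroup.center P = ⊤ := by
      rw [Subgroup.eq_top_iff']
      intro x
      rw [Subgroup.mem_center_iff]
      intro g
      exact commutatorElement_eq_one_iff_mul_comm.mp (h x g)
    have hcard : Nat.card (Subgroup.center P) = Nat.card P := by
      rw [hZtop]
      exact Nat.card_congr (Equiv.subtypeUnivEquiv fun x => Subgroup.mem_top x)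
    rw [hP.card_center] at hcard
    omega
  -- c := ⁅b,a⁆ is a nontrivial central element generating the center
  have hcmem : ⁅b, a⁆ ∈ Subgroup.center P := hP.commutator_mem b a
  set cz : ↥(Subgroup.center P) := ⟨⁅b, a⁆, hcmem⟩ with hczdef
  have hcz1 : cz ≠ 1 := by
    intro h
    exact hab (congrArg Subtype.val h)
  have hord : orderOf cz = p := by
    have hdvd : orderOf cz ∣ p := by
      rw [← hP.card_center]; exact orderOf_dvd_natCard cz
    rcases hp.eq_one_or_self_of_dvd _ hdvd with h | h
    · exact absurd (orderOf_eq_one_iff.mp h) hcz1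
    · exact h
  have htop : Subgroup.zpowers cz = ⊤ := by
    apply Subgroup.eq_top_of_card_eq
    rw [Nat.card_zpowers, hord, hP.card_center]
  have hmem : z₀ ∈ Subgroup.zpowers cz := htop ▸ Subgroup.mem_top z₀
  rw [← mem_powers_iff_mem_zpowers] at hmem
  obtain ⟨k, hk⟩ := hmem
  -- key commutator power identity
  have hconj : ∀ n : ℕ, b ^ n * a * (b ^ n)⁻¹ = ⁅b, a⁆ ^ n * a := by
    intro n
    induction n with
    | zero => simp
    | succ n ih =>
      have hcen : ∀ x : P, x * ⁅b, a⁆ ^ n = ⁅b, a⁆ ^ n * x :=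
        fun x => Subgroup.mem_center_iff.mp (pow_mem hcmem n) x
      calc b ^ (n + 1) * a * (b ^ (n + 1))⁻¹
          = b * (b ^ n * a * (b ^ n)⁻¹) * b⁻¹ := by group
        _ = b * (⁅b, a⁆ ^ n * a) * b⁻¹ := by rw [ih]
        _ = (b * ⁅b, a⁆ ^ n) * a * b⁻¹ := by group
        _ = (⁅b, a⁆ ^ n * b) * a * b⁻¹ := by rw [hcen b]
        _ = ⁅b, a⁆ ^ (n + 1) * a := by
            rw [commutatorElement_def, pow_succ]
            group
  set b' : P := b ^ k with hb'def
  have hzeq : (z₀ : P) = ⁅b', a⁆ := by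
    have hk' : cz ^ k = z₀ := hk
    have h1 : (z₀ : P) = ⁅b, a⁆ ^ k := by
      rw [← hk']
      simp [hczdef]
    have h2 : ⁅b ^ k, a⁆ = ⁅b, a⁆ ^ k := by
      rw [show ⁅b ^ k, a⁆ = b ^ k * a * (b ^ k)⁻¹ * a⁻¹ from rfl, hconj k]
      group
    rw [h1, hb'def, h2]
  -- the extension restricted to inr
  set G := P ⋊[conjQuot P] (P ⧸ Subgroup.center P) with hGdef
  have hconjQuot : ∀ (g n : P), conjQuot P (g : P ⧸ Subgroup.center P) n = g * n * g⁻¹ := by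
    intro g n
    show (QuotientGroup.lift _ MulAut.conj _ (QuotientGroup.mk g)) n = _
    rfl
  set R : P → Module.End ℂ V :=
    fun g => π (SemidirectProduct.inr (g : P ⧸ Subgroup.center P)) with hRdef
  have hIR : ∀ g n : P, ω (g * n * g⁻¹) * R g = R g * ω n := by
    intro g n
    have h1 : (SemidirectProduct.inl (g * n * g⁻¹) : G)
        = SemidirectProduct.inr (g : P ⧸ Subgroup.center P) * SemidirectProduct.inl n *
            SemidirectProduct.inr ((g : P ⧸ Subgroup.center P))⁻¹ := by
      rw [← hconjQuot g n]
      exact SemidirectProduct.inl_aut _ n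
    have h2 : (SemidirectProduct.inl (g * n * g⁻¹) : G) *
          SemidirectProduct.inr (g : P ⧸ Subgroup.center P)
        = SemidirectProduct.inr (g : P ⧸ Subgroup.center P) * SemidirectProduct.inl n := by
      rw [h1, mul_assoc, mul_assoc, ← map_mul, inv_mul_cancel, map_one, mul_one]
    calc ω (g * n * g⁻¹) * R g
        = π (SemidirectProduct.inl (g * n * g⁻¹)) *
            π (SemidirectProduct.inr (g : P ⧸ Subgroup.center P)) := by rw [hπ]
      _ = π ((SemidirectProduct.inl (g * n * g⁻¹) : G) *
            SemidirectProduct.inr (g : P ⧸ Subgroup.center P)) := (map_mul π _ _).symm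
      _ = π ((SemidirectProduct.inr (g : P ⧸ Subgroup.center P) : G) *
            SemidirectProduct.inl n) := by rw [h2]
      _ = R g * ω n := by rw [map_mul, hπ]
  -- each R g is a scalar multiple of ω g
  have hsc : ∀ g : P, ∃ μ : ℂ, ∀ v : V, R g v = μ • ω g v := by
    intro g
    have hTcomm : ∀ n : P, (ω g⁻¹ * R g) * ω n = ω n * (ω g⁻¹ * R g) := by
      intro n
      have e1 : ω g⁻¹ * ω (g * n * g⁻¹) = ω n * ω g⁻¹ := by
        rw [← map_mul, ← map_mul, show g⁻¹ * (g * n * g⁻¹) = n * g⁻¹ by group]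
      calc (ω g⁻¹ * R g) * ω n
          = ω g⁻¹ * (R g * ω n) := mul_assoc _ _ _
        _ = ω g⁻¹ * (ω (g * n * g⁻¹) * R g) := by rw [hIR g n]
        _ = (ω g⁻¹ * ω (g * n * g⁻¹)) * R g := (mul_assoc _ _ _).symm
        _ = (ω n * ω g⁻¹) * R g := by rw [e1]
        _ = ω n * (ω g⁻¹ * R g) := mul_assoc _ _ _
    obtain ⟨μ, hμ⟩ := schur_scalar_s15 hirr (ω g⁻¹ * R g) hTcomm
    refine ⟨μ, fun v => ?_⟩
    have hinv : ∀ w : V, ω g (ω g⁻¹ w) = w := by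
      intro w
      have h3 : (ω g * ω g⁻¹) w = w := by
        rw [← map_mul, mul_inv_cancel, map_one, Module.End.one_apply]
      simpa [Module.End.mul_apply] using h3
    calc R g v = ω g (ω g⁻¹ (R g v)) := (hinv _).symm
      _ = ω g ((ω g⁻¹ * R g) v) := rfl
      _ = ω g (μ • v) := by rw [hμ v]
      _ = μ • ω g v := map_smul _ _ _
  obtain ⟨μa, hμa⟩ := hsc a
  obtain ⟨μb, hμb⟩ := hsc b'
  -- the scalars are nonzero
  have hμ0 : ∀ (g : P) (μ : ℂ), (∀ v : V, R g v = μ • ω g v) → μ ≠ 0 := by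
    intro g μ hμ h0
    obtain ⟨v₀, hv₀⟩ := exists_ne (0 : V)
    have h1 : R g (π ((SemidirectProduct.inr (g : P ⧸ Subgroup.center P) : G)⁻¹) v₀) = v₀ := by
      have h2 : (π (SemidirectProduct.inr (g : P ⧸ Subgroup.center P)) *
          π ((SemidirectProduct.inr (g : P ⧸ Subgroup.center P) : G)⁻¹)) v₀ = v₀ := by
        rw [← map_mul, mul_inv_cancel, map_one, Module.End.one_apply]
      simpa [Module.End.mul_apply, hRdef] using h2
    rw [hμ, h0, zero_smul] at h1
    exact hv₀ h1.symm
  have hμa0 : μa ≠ 0 := hμ0 a μa hμa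
  have hμb0 : μb ≠ 0 := hμ0 b' μb hμb
  -- R a and R b' commute since the quotient images commute
  have hq : ((b' * a : P) : P ⧸ Subgroup.center P) = ((a * b' : P) : P ⧸ Subgroup.center P) := by
    rw [QuotientGroup.eq]
    have h5 := hP.commutator_mem a⁻¹ b'⁻¹
    convert h5 using 1
    rw [commutatorElement_def]
    group
  have hRR : R b' * R a = R a * R b' := by
    have h6 : ((b' : P ⧸ Subgroup.center P)) * (a : P ⧸ Subgroup.center P)
        = (a : P ⧸ Subgroup.center P) * (b' : P ⧸ Subgroup.center P) := by
      rw [← QuotientGroup.mk_mul, ← QuotientGroup.mk_mul]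
      exact hq
    simp only [hRdef]
    rw [← map_mul π, ← map_mul (SemidirectProduct.inr), h6,
      map_mul (SemidirectProduct.inr), map_mul π]
  -- deduce commutation of ω b' and ω a up to the central character, then contradiction
  have hωcomm : ∀ v : V, ω (b' * a) v = ω (a * b') v := by
    intro v
    have h1 := congrArg (fun f : Module.End ℂ V => f v) hRR
    simp only [Module.End.mul_apply] at h1
    rw [hμa v, map_smul, hμb, hμb v, map_smul, hμa] at h1
    rw [smul_smul, smul_smul, mul_comm μa μb] at h1
    have h2 := smul_right_injective V (mul_ne_zero hμb0 hμa0) h1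
    rw [map_mul, map_mul, Module.End.mul_apply, Module.End.mul_apply]
    exact h2
  have hd : b' * a = (z₀ : P) * (a * b') := by
    rw [hzeq, commutatorElement_def]
    group
  obtain ⟨v₀, hv₀⟩ := exists_ne (0 : V)
  have h2 : ω ((z₀ : P)) v₀ = v₀ := by
    have h4 : ω (a * b') (ω ((a * b')⁻¹) v₀) = v₀ := by
      have h5 : (ω (a * b') * ω ((a * b')⁻¹)) v₀ = v₀ := by
        rw [← map_mul, mul_inv_cancel, map_one, Module.End.one_apply]
      simpa [Module.End.mul_apply] using h5
    have h3 := hωcomm (ω ((a * b')⁻¹) v₀)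
    rw [hd, map_mul, Module.End.mul_apply, h4] at h3
    exact h3
  rw [hcent z₀] at h2
  simp only [LinearMap.smul_apply, LinearMap.id_apply] at h2
  have h7 : ((ψ z₀ : ℂˣ) : ℂ) = 1 := by
    by_contra hne
    have h8 : (((ψ z₀ : ℂˣ) : ℂ) - 1) • v₀ = 0 := by
      rw [sub_smul, one_smul, h2, sub_self]
    rcases smul_eq_zero.mp h8 with h | h
    · exact hne (by linear_combination h)
    · exact hv₀ h
  exact hz₀ (Units.ext (by rw [h7, Units.val_one]))
end

section
/- Let p be an odd prime and let P be a Heisenberg 𝔽_p-group with |P| > p. Fix an identification of Z(P) with 𝔽_p, write V := P/Z(P) with the nondegenerate alternating form ω_P(xZ(P), yZ(P)) = [x,y], and let V♯ := V♯_{ω_P/2} (the group 𝔽_p × V with multiplication (a,v)(b,w) = (a + b + ½ω_P(v,w), v + w)). Let Sp(V) be the group of linear automorphisms of V preserving ω_P, acting on V♯ by g·(a,v) = (a, g v). Let A be a subgroup of Aut^{Z}(P), the automorphisms of P acting trivially on Z(P), and let pr : A → Sp(V) be the map sending an automorphism to the induced map on V. Suppose f₁, f₂ : A ⋉ P → Sp(V)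 ⋉ V♯ are group homomorphisms such that, for i = 1, 2: f_i(a, 1) = (pr(a), 1) for all a ∈ A, and the restriction of f_i to {1} ⋉ P is an isomorphism onto {1} ⋉ V♯ which is special, i.e., the induced map on quotients V = P/Z(P) → V♯/(𝔽_p × {0}) = V is the identity. Then there exists h ∈ P such that f₂(g) = f₁((1,h) · g · (1,h)⁻¹) for all g ∈ A ⋉ P. -/
open scoped commutatorElement

section Sharp

variable {k : Type*} [Field k] {V : Type*} [AddCommGroup V] [Module k V]

/-- The group `V♯_B`: the set `k × V` with multiplication
`(a,v)·(b,w) = (a + b + B(v,w), v + w)`. -/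
@[ext]
structure Sharp (B : V →ₗ[k] V →ₗ[k] k) : Type _ where
  a : k
  v : V

namespace Sharp

variable {B : V →ₗ[k] V →ₗ[k] k}

instance : Mul (Sharp B) := ⟨fun x y => ⟨x.a + y.a + B x.v y.v, x.v + y.v⟩⟩
instance : One (Sharp B) := ⟨⟨0, 0⟩⟩
instance : Inv (Sharp B) := ⟨fun x => ⟨-x.a + B x.v x.v, -x.v⟩⟩

@[simp] theorem mul_a (x y : Sharp B) : (x * y).a = x.a + y.a + B x.v y.v := rfl
@[simp] theorem mul_v (x y : Sharp B) : (x * y).v = x.v + y.v := rfl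
@[simp] theorem one_a : (1 : Sharp B).a = 0 := rfl
@[simp] theorem one_v : (1 : Sharp B).v = 0 := rfl
@[simp] theorem inv_a (x : Sharp B) : x⁻¹.a = -x.a + B x.v x.v := rfl
@[simp] theorem inv_v (x : Sharp B) : x⁻¹.v = -x.v := rfl

instance : Group (Sharp B) where
  mul_assoc x y z := by
    ext
    · simp only [mul_a, mul_v, map_add, LinearMap.add_apply]
      ring
    · simp only [mul_v, add_assoc]
  one_mul x := by
    ext
    · simp
    · simp
  mul_one x := by
    ext
    · simp
    · simp
  inv_mul_cancel x := by
    ext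
    · simp only [mul_a, inv_a, inv_v, one_a, map_neg, LinearMap.neg_apply]
      ring
    · simp

end Sharp

/-- The symplectic group of the form `ω`: linear automorphisms of `V`
preserving `ω`. -/
def SpGrp (ω : V →ₗ[k] V →ₗ[k] k) : Subgroup (V ≃ₗ[k] V) where
  carrier := {g | ∀ v w : V, ω (g v) (g w) = ω v w}
  one_mem' := by
    intro v w
    simp
  mul_mem' := by
    intro g h hg hh v w
    calc ω ((g * h) v) ((g * h) w) = ω (g (h v)) (g (h w)) := rfl
      _ = ω (h v) (h w) := hg _ _
      _ = ω v w := hh _ _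
  inv_mem' := by
    intro g hg v w
    have h1 := hg (g.symm v) (g.symm w)
    rw [LinearEquiv.apply_symm_apply, LinearEquiv.apply_symm_apply] at h1
    show ω (g.symm v) (g.symm w) = ω v w
    exact h1.symm

variable (c : k) (ω : V →ₗ[k] V →ₗ[k] k)

/-- The action of an element of `Sp(V, ω)` on `V♯_{c·ω}`, `g·(a,v) = (a, gv)`. -/
def spAut (g : ↥(SpGrp ω)) : Sharp (c • ω) ≃* Sharp (c • ω) where
  toFun x := ⟨x.a, (g : V ≃ₗ[k] V) x.v⟩
  invFun x := ⟨x.a, (g : V ≃ₗ[k] V).symm x.v⟩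
  left_inv x := by
    ext
    · rfl
    · simp
  right_inv x := by
    ext
    · rfl
    · simp
  map_mul' x y := by
    ext
    · show (x * y).a = x.a + y.a + (c • ω) ((g : V ≃ₗ[k] V) x.v) ((g : V ≃ₗ[k] V) y.v)
      simp only [Sharp.mul_a, LinearMap.smul_apply, smul_eq_mul, g.2 x.v y.v]
    · simp

/-- The action of `Sp(V, ω)` on `V♯_{c·ω}` as a homomorphism into the
automorphism group. -/
def spHom : ↥(SpGrp ω) →* MulAut (Sharp (c • ω)) where
  toFun := spAut c ω
  map_one' := by
    apply MulEquiv.ext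
    intro x
    apply Sharp.ext
    · rfl
    · show ((1 : ↥(SpGrp ω)) : V ≃ₗ[k] V) x.v = ((1 : MulAut (Sharp (c • ω))) x).v
      simp
  map_mul' g h := by
    apply MulEquiv.ext
    intro x
    apply Sharp.ext
    · rfl
    · rfl

end Sharp

/-- The image in `V` of an element of `P`, under the fixed identification `θ`
of `P/Z(P)` with `V`. -/
def toV {P : Type*} [Group P] {V : Type*} [AddCommGroup V]
    (θ : (P ⧸ Subgroup.center P) ≃* Multiplicative V) (x : P) : V :=
  Multiplicative.toAdd (θ (x : P ⧸ Subgroup.center P))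

set_option maxHeartbeats 3200000 in
/-- Uniqueness, up to conjugation by an element of `P`, of special
isomorphisms for an odd prime `p`: if `f₁, f₂ : A ⋉ P → Sp(V) ⋉ V♯` are
homomorphisms which on `A` are given by the natural projection `A → Sp(V)` and
whose restrictions to `P` are special isomorphisms onto `{1} ⋉ V♯`, then
`f₂ = f₁ ∘ (conjugation by some `h ∈ P`)`.  Here `P` is a Heisenberg
`𝔽_p`-group with `|P| > p`, `Z(P)` is identified with `𝔽_p` via `ι`,
`V = P/Z(P)` (identified via `θ`), `ω` is the commutator form `ω_P`, and
`V♯ = V♯_{ω_P/2}`. -/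
theorem stmt_16 (p : ℕ) [Fact p.Prime] (hp2 : p ≠ 2)
    (P : Type*) [Group P] [Finite P] (hP : IsHeisenberg p P)
    (hbig : p < Nat.card P)
    (V : Type*) [AddCommGroup V] [Module (ZMod p) V]
    (ι : ↥(Subgroup.center P) ≃* Multiplicative (ZMod p))
    (θ : (P ⧸ Subgroup.center P) ≃* Multiplicative V)
    (ω : V →ₗ[ZMod p] V →ₗ[ZMod p] ZMod p)
    (hω : ∀ x y : P, ι ⟨⁅x, y⁆, hP.commutator_mem x y⟩ =
      Multiplicative.ofAdd (ω (toV θ x) (toV θ y)))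
    (A : Subgroup (MulAut P))
    (hA : ∀ α ∈ A, ∀ z ∈ Subgroup.center P, α z = z)
    (f₁ f₂ : (P ⋊[A.subtype] ↥A) →*
      (Sharp ((2 : ZMod p)⁻¹ • ω) ⋊[spHom ((2 : ZMod p)⁻¹) ω] ↥(SpGrp ω)))
    -- each `f i` restricted to `A` is the natural projection `A → Sp(V)`
    (hf₁A : ∀ α : ↥A, ∃ g : ↥(SpGrp ω),
      f₁ (SemidirectProduct.inr α) = SemidirectProduct.inr g ∧
      ∀ x : P, toV θ ((α : MulAut P) x) = (g : V ≃ₗ[ZMod p] V) (toV θ x))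
    (hf₂A : ∀ α : ↥A, ∃ g : ↥(SpGrp ω),
      f₂ (SemidirectProduct.inr α) = SemidirectProduct.inr g ∧
      ∀ x : P, toV θ ((α : MulAut P) x) = (g : V ≃ₗ[ZMod p] V) (toV θ x))
    -- each `f i` restricted to `{1} ⋉ P` is a special isomorphism onto `{1} ⋉ V♯`
    (hf₁P : (∀ x : P, ∃ a : ZMod p,
        f₁ (SemidirectProduct.inl x) = SemidirectProduct.inl ⟨a, toV θ x⟩) ∧
      Function.Injective (fun x : P => f₁ (SemidirectProduct.inl x)) ∧
      ∀ y : Sharp ((2 : ZMod p)⁻¹ • ω), ∃ x : P,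
        f₁ (SemidirectProduct.inl x) = SemidirectProduct.inl y)
    (hf₂P : (∀ x : P, ∃ a : ZMod p,
        f₂ (SemidirectProduct.inl x) = SemidirectProduct.inl ⟨a, toV θ x⟩) ∧
      Function.Injective (fun x : P => f₂ (SemidirectProduct.inl x)) ∧
      ∀ y : Sharp ((2 : ZMod p)⁻¹ • ω), ∃ x : P,
        f₂ (SemidirectProduct.inl x) = SemidirectProduct.inl y) :
    ∃ h : P, ∀ g : P ⋊[A.subtype] ↥A,
      f₂ g = f₁ (SemidirectProduct.inl h * g * (SemidirectProduct.inl h)⁻¹) := by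
  classical
  obtain ⟨ha₁', hinj₁, hsurj₁⟩ := hf₁P
  obtain ⟨ha₂', hinj₂, hsurj₂⟩ := hf₂P
  choose a₁ ha₁ using ha₁'
  choose a₂ ha₂ using ha₂'
  choose g₁ hg₁ hg₁' using hf₁A
  choose g₂ hg₂ hg₂' using hf₂A
  have hp : p.Prime := Fact.out
  have h2ne : (2 : ZMod p) ≠ 0 := by
    intro h
    have hdvd : (p : ℕ) ∣ 2 := (ZMod.natCast_eq_zero_iff 2 p).mp (by exact_mod_cast h)
    exact hp2 ((Nat.prime_dvd_prime_iff_eq hp Nat.prime_two).mp hdvd)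
  have h2inv : (2 : ZMod p)⁻¹ * 2 = 1 := inv_mul_cancel₀ h2ne
  -- basic facts about toV
  have htoV_mul : ∀ x y : P, toV θ (x * y) = toV θ x + toV θ y := by
    intro x y
    show Multiplicative.toAdd (θ ((x : P ⧸ Subgroup.center P) * y)) = _
    rw [map_mul]
    rfl
  have htoV_one : toV θ (1 : P) = 0 := by
    show Multiplicative.toAdd (θ 1) = 0
    rw [map_one]
    rfl
  have htoV_center : ∀ z ∈ Subgroup.center P, toV θ z = 0 := by
    intro z hz
    show Multiplicative.toAdd (θ (z : P ⧸ Subgroup.center P)) = 0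
    rw [(QuotientGroup.eq_one_iff z).mpr hz, map_one]
    rfl
  have htoV_inv : ∀ x : P, toV θ x⁻¹ = - toV θ x := by
    intro x
    have := htoV_mul x x⁻¹
    rw [mul_inv_cancel, htoV_one] at this
    exact eq_neg_of_add_eq_zero_right this.symm
  have htoV_surj : ∀ v : V, ∃ x : P, toV θ x = v := by
    intro v
    obtain ⟨x, hx⟩ := QuotientGroup.mk_surjective (θ.symm (Multiplicative.ofAdd v))
    refine ⟨x, ?_⟩
    show Multiplicative.toAdd (θ (x : P ⧸ Subgroup.center P)) = v
    rw [hx, MulEquiv.apply_symm_apply]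
    rfl
  -- same class mod center
  have htoV_eq : ∀ x y : P, toV θ x = toV θ y → ∃ z ∈ Subgroup.center P, y = x * z := by
    intro x y hxy
    have h2 : (x : P ⧸ Subgroup.center P) = (y : P ⧸ Subgroup.center P) :=
      θ.injective (Multiplicative.toAdd.injective hxy)
    have h3 : x⁻¹ * y ∈ Subgroup.center P := QuotientGroup.eq.mp h2
    exact ⟨x⁻¹ * y, h3, by group⟩
  -- ω facts
  have hω_self : ∀ v : V, ω v v = 0 := by
    intro v
    obtain ⟨x, hx⟩ := htoV_surj v
    have h1 := hω x x
    rw [hx] at h1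
    have h2 : (⟨⁅x, x⁆, hP.commutator_mem x x⟩ : Subgroup.center P) = 1 := by
      ext
      show ⁅x, x⁆ = 1
      group
    rw [h2, map_one] at h1
    have := congrArg Multiplicative.toAdd h1
    simpa using this.symm
  have hω_skew : ∀ v w : V, ω w v = - ω v w := by
    intro v w
    have h := hω_self (v + w)
    simp only [map_add, LinearMap.add_apply, hω_self] at h
    linear_combination h
  have hnd : ∀ v : V, (∀ w : V, ω v w = 0) → v = 0 := by
    intro v hv
    obtain ⟨x, hx⟩ := htoV_surj v
    have hxc : x ∈ Subgroup.center P := by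
      rw [Subgroup.mem_center_iff]
      intro y
      have h1 := hω x y
      rw [hx, hv, ofAdd_zero] at h1
      have h2 : (⟨⁅x, y⁆, hP.commutator_mem x y⟩ : Subgroup.center P) = 1 := by
        apply ι.injective
        rw [h1, map_one]
      have h3 : ⁅x, y⁆ = 1 := congrArg Subtype.val h2
      exact (commutatorElement_eq_one_iff_mul_comm.mp h3).symm
    rw [← hx, htoV_center x hxc]
  -- a-component multiplicativity
  have hS1 : ∀ (f : (P ⋊[A.subtype] ↥A) →*
      (Sharp ((2 : ZMod p)⁻¹ • ω) ⋊[spHom ((2 : ZMod p)⁻¹) ω] ↥(SpGrp ω)))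
      (a : P → ZMod p)
      (haf : ∀ x : P, f (SemidirectProduct.inl x) = SemidirectProduct.inl ⟨a x, toV θ x⟩),
      a 1 = 0 ∧ ∀ x y : P, a (x * y) =
        a x + a y + ((2 : ZMod p)⁻¹ • ω) (toV θ x) (toV θ y) := by
    intro f a haf
    constructor
    · have h1 := haf 1
      rw [show (SemidirectProduct.inl (1 : P) : P ⋊[A.subtype] ↥A) = 1 from map_one _,
        map_one f] at h1
      have h2 : (⟨a 1, toV θ 1⟩ : Sharp ((2 : ZMod p)⁻¹ • ω)) = 1 :=
        SemidirectProduct.inl_injective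
          (by rw [← h1]; exact (map_one SemidirectProduct.inl).symm)
      simpa using congrArg Sharp.a h2
    · intro x y
      have h1 : f (SemidirectProduct.inl (x * y)) =
          f (SemidirectProduct.inl x) * f (SemidirectProduct.inl y) := by
        rw [← map_mul, ← map_mul]
      rw [haf, haf, haf, ← map_mul] at h1
      have h2 := SemidirectProduct.inl_injective h1
      have h3 := congrArg Sharp.a h2
      simpa [htoV_mul] using h3
  obtain ⟨h1a₁, hmul₁⟩ := hS1 f₁ a₁ ha₁
  obtain ⟨h1a₂, hmul₂⟩ := hS1 f₂ a₂ ha₂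
  -- φ as a monoid hom
  set φ : P → ZMod p := fun x => a₂ x - a₁ x with hφ_def
  have hφ_mul : ∀ x y : P, φ (x * y) = φ x + φ y := by
    intro x y
    simp only [hφ_def, hmul₁, hmul₂]
    ring
  let Φ : P →* Multiplicative (ZMod p) :=
    { toFun := fun x => Multiplicative.ofAdd (φ x)
      map_one' := by
        simp only [hφ_def, h1a₁, h1a₂]
        simp
      map_mul' := by
        intro x y
        simp only [hφ_mul, ofAdd_add] }
  have hΦ : ∀ x : P, Φ x = Multiplicative.ofAdd (φ x) := fun _ => rfl
  -- φ vanishes on the center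
  have hφ_inv : ∀ x : P, φ x⁻¹ = - φ x := by
    intro x
    have := hφ_mul x x⁻¹
    rw [mul_inv_cancel] at this
    have h0 : φ (1 : P) = 0 := by simp only [hφ_def, h1a₁, h1a₂, sub_zero]
    rw [h0] at this
    exact eq_neg_of_add_eq_zero_right this.symm
  have hφ_comm : ∀ x y : P, φ ⁅x, y⁆ = 0 := by
    intro x y
    have h1 : Φ ⁅x, y⁆ = ⁅Φ x, Φ y⁆ := map_commutatorElement Φ x y
    have h2 : ⁅Φ x, Φ y⁆ = 1 := commutatorElement_eq_one_iff_mul_comm.mpr (mul_comm _ _)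
    have h3 : Φ ⁅x, y⁆ = 1 := h1.trans h2
    have := congrArg Multiplicative.toAdd h3
    exact this
  -- the center is generated by a commutator
  have hnab : ∃ x y : P, ⁅x, y⁆ ≠ 1 := by
    by_contra hcon
    push_neg at hcon
    have hcen : Subgroup.center P = ⊤ := by
      rw [eq_top_iff]
      intro x _
      rw [Subgroup.mem_center_iff]
      intro y
      exact (commutatorElement_eq_one_iff_mul_comm.mp (hcon x y)).symm
    have := hP.card_center
    rw [hcen, Subgroup.card_top] at this
    omega
  obtain ⟨x₀, y₀, hc⟩ := hnab
  have hφ_center : ∀ z ∈ Subgroup.center P, φ z = 0 := by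
    have hcmem : ⁅x₀, y₀⁆ ∈ Subgroup.center P := hP.commutator_mem x₀ y₀
    have horder : orderOf ⁅x₀, y₀⁆ = p := by
      have hdvd : orderOf ⁅x₀, y₀⁆ ∣ p := by
        have := Subgroup.orderOf_dvd_natCard (Subgroup.center P) hcmem
        rwa [hP.card_center] at this
      rcases (Nat.Prime.eq_one_or_self_of_dvd hp _ hdvd) with h | h
      · exact absurd (orderOf_eq_one_iff.mp h) hc
      · exact h
    have hzp : Subgroup.zpowers ⁅x₀, y₀⁆ = Subgroup.center P := by
      have hle : Subgroup.zpowers ⁅x₀, y₀⁆ ≤ Subgroup.center P :=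
        Subgroup.zpowers_le.mpr hcmem
      refine Subgroup.eq_of_le_of_card_ge hle ?_
      rw [hP.card_center, Nat.card_zpowers, horder]
    intro z hz
    rw [← hzp] at hz
    obtain ⟨k, hk⟩ := hz
    have h1 : Φ z = 1 := by
      rw [← hk, map_zpow]
      have : Φ ⁅x₀, y₀⁆ = 1 := by
        rw [hΦ, hφ_comm]
        rfl
      rw [this, one_zpow]
    have := congrArg Multiplicative.toAdd h1
    exact this
  -- a section of toV
  choose s hs using htoV_surj
  set lam : V → ZMod p := fun v => φ (s v) with hlam_def
  have hφ_lam : ∀ x : P, φ x = lam (toV θ x) := by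
    intro x
    obtain ⟨z, hz, hxz⟩ := htoV_eq (s (toV θ x)) x (by rw [hs])
    calc φ x = φ (s (toV θ x) * z) := by rw [← hxz]
      _ = φ (s (toV θ x)) + φ z := hφ_mul _ _
      _ = lam (toV θ x) := by rw [hφ_center z hz, add_zero]
  have hlam_add : ∀ v w : V, lam (v + w) = lam v + lam w := by
    intro v w
    have h1 : toV θ (s v * s w) = v + w := by rw [htoV_mul, hs, hs]
    have h2 := hφ_lam (s v * s w)
    rw [h1, hφ_mul] at h2
    rw [← h2, hlam_def]
  -- lam as a linear map
  let lamAdd : V →+ ZMod p := AddMonoidHom.mk' lam hlam_add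
  let Λ : V →ₗ[ZMod p] ZMod p := lamAdd.toZModLinearMap p
  have hΛ : ∀ v : V, Λ v = lam v := fun _ => rfl
  -- finiteness of V
  haveI hVfin : Finite V :=
    Finite.of_equiv (P ⧸ Subgroup.center P) (θ.toEquiv.trans Multiplicative.toAdd)
  haveI : Module.Finite (ZMod p) V := Module.Finite.of_finite
  -- ω as a map to the dual is surjective
  have hωinj : Function.Injective (ω : V →ₗ[ZMod p] Module.Dual (ZMod p) V) := by
    intro v w hvw
    have h1 : ∀ u : V, ω (v - w) u = 0 := by
      intro u
      rw [map_sub, LinearMap.sub_apply]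
      rw [show ω v = ω w from hvw]
      ring
    have := hnd (v - w) h1
    exact sub_eq_zero.mp this
  have hωsurj : Function.Surjective (ω : V →ₗ[ZMod p] Module.Dual (ZMod p) V) := by
    have hfr : Module.finrank (ZMod p) V =
        Module.finrank (ZMod p) (Module.Dual (ZMod p) V) :=
      Subspace.dual_finrank_eq.symm
    exact (LinearMap.injective_iff_surjective_of_finrank_eq_finrank hfr).mp hωinj
  obtain ⟨u, hu⟩ := hωsurj Λ
  have hu' : ∀ v : V, ω u v = lam v := by
    intro v
    rw [show (ω u : Module.Dual (ZMod p) V) = Λ from hu, hΛ]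
  -- equivariance of the a-components
  have haut : ∀ (f : (P ⋊[A.subtype] ↥A) →*
      (Sharp ((2 : ZMod p)⁻¹ • ω) ⋊[spHom ((2 : ZMod p)⁻¹) ω] ↥(SpGrp ω)))
      (a : P → ZMod p)
      (_ : ∀ x : P, f (SemidirectProduct.inl x) = SemidirectProduct.inl ⟨a x, toV θ x⟩)
      (g : ↥A → ↥(SpGrp ω))
      (_ : ∀ α : ↥A, f (SemidirectProduct.inr α) = SemidirectProduct.inr (g α))
      (α : ↥A) (x : P), a ((α : MulAut P) x) = a x := by
    intro f a haf g hg α x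
    have einv : f (SemidirectProduct.inr α⁻¹) = SemidirectProduct.inr ((g α)⁻¹) := by
      have e : (SemidirectProduct.inr α⁻¹ : P ⋊[A.subtype] ↥A) =
          (SemidirectProduct.inr α)⁻¹ := map_inv _ _
      rw [e, map_inv, hg, ← map_inv]
    have e0 := SemidirectProduct.inl_aut (φ := A.subtype) α x
    have e1 := congrArg f e0
    rw [map_mul, map_mul, hg, haf x, einv] at e1
    have e2 := congrArg (fun z => z.left.a) e1
    simp only [SemidirectProduct.mul_left, SemidirectProduct.mul_right,
      SemidirectProduct.left_inl, SemidirectProduct.left_inr,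
      SemidirectProduct.right_inl, SemidirectProduct.right_inr,
      map_one, mul_one, one_mul] at e2
    have e3 : (f (SemidirectProduct.inl ((α : MulAut P) x))).left.a = a x := e2
    rw [haf] at e3
    exact e3
  have hφ_α : ∀ (α : ↥A) (x : P), φ ((α : MulAut P) x) = φ x := by
    intro α x
    simp only [hφ_def, haut f₁ a₁ ha₁ g₁ hg₁ α x, haut f₂ a₂ ha₂ g₂ hg₂ α x]
  -- g₁ = g₂
  have hgeq : ∀ α : ↥A, g₁ α = g₂ α := by
    intro α
    apply Subtype.ext
    apply LinearEquiv.toLinearMap_injective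
    apply LinearMap.ext
    intro v
    show (g₁ α : V ≃ₗ[ZMod p] V) v = (g₂ α : V ≃ₗ[ZMod p] V) v
    rw [← hs v, ← hg₁' α (s v), hg₂' α (s v)]
  -- lam is invariant under the symplectic images of A
  have hlam_inv : ∀ (α : ↥A) (v : V), lam ((g₁ α : V ≃ₗ[ZMod p] V) v) = lam v := by
    intro α v
    rw [← hs v, ← hg₁' α (s v), ← hφ_lam, ← hφ_lam, hφ_α]
  -- u is fixed by the symplectic images of A
  have hfix : ∀ α : ↥A, (g₁ α : V ≃ₗ[ZMod p] V) u = u := by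
    intro α
    set g := (g₁ α : V ≃ₗ[ZMod p] V) with hg_def
    have key : ∀ w : V, ω (g u - u) w = 0 := by
      intro w
      have e2 : g (g.symm w) = w := g.apply_symm_apply w
      have hsp := (g₁ α).2 u (g.symm w)
      rw [← hg_def, e2] at hsp
      have h3 : ω u (g.symm w) = lam (g.symm w) := hu' _
      have h4 : ω u w = lam w := hu' w
      have h5 : lam (g (g.symm w)) = lam (g.symm w) := hlam_inv α _
      rw [e2] at h5
      rw [map_sub, LinearMap.sub_apply, hsp, h3, ← h5, h4]
      ring
    have h6 := hnd _ key
    exact sub_eq_zero.mp h6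
  -- the conjugating element
  refine ⟨s u, ?_⟩
  set h₀ : P := s u with hh₀
  have hvh : toV θ h₀ = u := hs u
  have ha₁inv : a₁ h₀⁻¹ = - a₁ h₀ := by
    have h1 := hmul₁ h₀ h₀⁻¹
    rw [mul_inv_cancel, h1a₁] at h1
    have hB : ((2 : ZMod p)⁻¹ • ω) (toV θ h₀) (toV θ h₀⁻¹) = 0 := by
      rw [htoV_inv, hvh]
      simp only [LinearMap.smul_apply, map_neg, smul_eq_mul, hω_self]
      ring
    rw [hB, add_zero] at h1
    linear_combination -h1
  -- conjugation formula on the `P`-part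
  have e1 : ∀ x : P, f₂ (SemidirectProduct.inl x) =
      f₁ (SemidirectProduct.inl h₀ * SemidirectProduct.inl x *
        (SemidirectProduct.inl h₀)⁻¹) := by
    intro x
    have h3 : SemidirectProduct.inl h₀ * SemidirectProduct.inl x *
        (SemidirectProduct.inl h₀)⁻¹ =
        (SemidirectProduct.inl (h₀ * x * h₀⁻¹) : P ⋊[A.subtype] ↥A) := by
      rw [map_mul, map_mul, map_inv]
    rw [h3, ha₁, ha₂]
    have hax : a₂ x = a₁ x + ω u (toV θ x) := by
      have h4 := hφ_lam x
      rw [← hu'] at h4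
      have h5 : a₂ x - a₁ x = ω u (toV θ x) := h4
      linear_combination h5
    have hconj : a₁ (h₀ * x * h₀⁻¹) = a₁ x + ω u (toV θ x) := by
      rw [hmul₁, hmul₁, ha₁inv, htoV_mul, htoV_inv, hvh]
      simp only [LinearMap.smul_apply, smul_eq_mul, map_add, LinearMap.add_apply,
        map_neg, LinearMap.neg_apply]
      have hskew := hω_skew (toV θ x) u
      have hself := hω_self u
      linear_combination (-(2 : ZMod p)⁻¹) * hself + (-(2 : ZMod p)⁻¹) * hskew +
        ((ω u) (toV θ x)) * h2inv
    have hto : toV θ (h₀ * x * h₀⁻¹) = toV θ x := by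
      rw [htoV_mul, htoV_mul, htoV_inv]
      abel
    congr 1
    ext
    · rw [hax, hconj]
    · rw [hto]
  -- conjugation formula on the `A`-part
  have e2 : ∀ α : ↥A, f₂ (SemidirectProduct.inr α) =
      f₁ (SemidirectProduct.inl h₀ * SemidirectProduct.inr α *
        (SemidirectProduct.inl h₀)⁻¹) := by
    intro α
    rw [hg₂, ← hgeq, map_mul, map_mul, map_inv, ha₁, hg₁]
    set σ : Sharp ((2 : ZMod p)⁻¹ • ω) := ⟨a₁ h₀, toV θ h₀⟩ with hσ
    have hfixσ : (spHom ((2 : ZMod p)⁻¹) ω (g₁ α)) σ = σ := by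
      show (⟨σ.a, (g₁ α : V ≃ₗ[ZMod p] V) σ.v⟩ : Sharp ((2 : ZMod p)⁻¹ • ω)) = σ
      rw [show σ.v = toV θ h₀ from rfl, hvh, hfix α]
      ext
      · rfl
      · exact hvh.symm
    have h6 := SemidirectProduct.inl_aut
      (φ := spHom ((2 : ZMod p)⁻¹) ω) (g₁ α) σ
    rw [hfixσ,
      show (SemidirectProduct.inr (g₁ α)⁻¹ :
          Sharp ((2 : ZMod p)⁻¹ • ω) ⋊[spHom ((2 : ZMod p)⁻¹) ω] ↥(SpGrp ω)) =
        (SemidirectProduct.inr (g₁ α))⁻¹ from map_inv _ _] at h6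
    have h7 := congrArg (· * SemidirectProduct.inr (g₁ α)) h6.symm
    simp only [inv_mul_cancel_right] at h7
    rw [← h7, mul_inv_cancel_right]
  -- assembly
  intro g
  calc f₂ g = f₂ (SemidirectProduct.inl g.left * SemidirectProduct.inr g.right) := by
        rw [SemidirectProduct.inl_left_mul_inr_right]
    _ = f₂ (SemidirectProduct.inl g.left) * f₂ (SemidirectProduct.inr g.right) :=
        map_mul _ _ _
    _ = f₁ (SemidirectProduct.inl h₀ * SemidirectProduct.inl g.left *
          (SemidirectProduct.inl h₀)⁻¹) *
        f₁ (SemidirectProduct.inl h₀ * SemidirectProduct.inr g.right *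
          (SemidirectProduct.inl h₀)⁻¹) := by rw [e1, e2]
    _ = f₁ ((SemidirectProduct.inl h₀ * SemidirectProduct.inl g.left *
          (SemidirectProduct.inl h₀)⁻¹) *
        (SemidirectProduct.inl h₀ * SemidirectProduct.inr g.right *
          (SemidirectProduct.inl h₀)⁻¹)) := (map_mul _ _ _).symm
    _ = f₁ (SemidirectProduct.inl h₀ * g * (SemidirectProduct.inl h₀)⁻¹) := by
        congr 1
        conv_rhs => rw [← SemidirectProduct.inl_left_mul_inr_right g]
        group
end
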